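/- arXiv:2505.05978 — 4 statements merged into one kernel-verified Lean document; each statement's English description precedes it below -/
import Mathlib

section
/- Let M, D, A be symmetric real N×N matrices with M, A positive definite and D positive semidefinite. For piecewise polynomial u in the dG space (with components in P^{r_n} on each interval I_n of a partition of (0,T]), define A(u,u) = Σ_n [∫_{I_n} (M u''·u' + D u'·u' + A u·u') dt] + Σ_{n=1}^{N-1}(M[u']_n·u'(t_n^+) + A[u]_n·u(t_n^+)) + M u'(0^+)·u'(0^+) + A u(0^+)·u(0^+). Then A(u,u) = Σ_n ∫_{I_n}|D^{1/2}u'|² dt + ½|M^{1/2}u'(0^+)|² + ½Σ_{n=1}^{N-1}|M^{1/2}[u']_n|² + ½|M^{1/2}u'(T^-)|² + ½|A^{1/2}u(0^+)|² + ½Σ_{n=1}^{N-1}|A^{1/2}[u]_n|² + ½|A^{1/2}u(T^-)|², and in particular A(u,u) ≥ 0. -/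
open Matrix

section dgAux

variable {d : ℕ}

private lemma sym_swap (M : Matrix (Fin d) (Fin d) ℝ) (hM : Mᵀ = M) (a b : Fin d → ℝ) :
    a ⬝ᵥ M.mulVec b = b ⬝ᵥ M.mulVec a := by
  rw [dotProduct_mulVec, ← mulVec_transpose, hM, dotProduct_comm]

private lemma jump_id (M : Matrix (Fin d) (Fin d) ℝ) (hM : Mᵀ = M) (a b : Fin d → ℝ) :
    M.mulVec (a - b) ⬝ᵥ a + (1/2) * (b ⬝ᵥ M.mulVec b) - (1/2) * (a ⬝ᵥ M.mulVec a)
      = (1/2) * ((a - b) ⬝ᵥ M.mulVec (a - b)) := by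
  have h1 := sym_swap M hM a b
  simp only [Matrix.mulVec_sub, sub_dotProduct, dotProduct_sub]
  rw [dotProduct_comm (M.mulVec a) a, dotProduct_comm (M.mulVec b) a, h1]
  ring

private lemma hasDerivAt_dotq (M : Matrix (Fin d) (Fin d) ℝ) (x y : ℝ → Fin d → ℝ)
    (x' y' : Fin d → ℝ) (s : ℝ)
    (hx : ∀ i, HasDerivAt (fun s => x s i) (x' i) s)
    (hy : ∀ i, HasDerivAt (fun s => y s i) (y' i) s) :
    HasDerivAt (fun s => x s ⬝ᵥ M.mulVec (y s))
      (x' ⬝ᵥ M.mulVec (y s) + x s ⬝ᵥ M.mulVec y') s := by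
  simp only [dotProduct, Matrix.mulVec, ← Finset.sum_add_distrib]
  apply HasDerivAt.fun_sum
  intro i _
  have hyi : HasDerivAt (fun s => (fun j => M i j) ⬝ᵥ y s) ((fun j => M i j) ⬝ᵥ y') s := by
    simp only [dotProduct]
    exact HasDerivAt.fun_sum fun j _ => (hy j).const_mul (M i j)
  exact (hx i).mul hyi

private lemma cont_dotq (Q : Matrix (Fin d) (Fin d) ℝ) (x y : ℝ → Fin d → ℝ)
    (hx : ∀ i, Continuous fun s => x s i) (hy : ∀ i, Continuous fun s => y s i) :
    Continuous fun s => x s ⬝ᵥ Q.mulVec (y s) := by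
  simp only [dotProduct, Matrix.mulVec]
  exact continuous_finset_sum _ fun i _ =>
    (hx i).mul (continuous_finset_sum _ fun j _ => continuous_const.mul (hy j))

private lemma deriv_polyvec (q : Fin d → Polynomial ℝ) :
    deriv (fun s (i : Fin d) => (q i).eval s) = fun s i => ((q i).derivative).eval s :=
  funext fun s => HasDerivAt.deriv (hasDerivAt_pi.mpr fun i => (q i).hasDerivAt s)

private lemma interval_id (M D A : Matrix (Fin d) (Fin d) ℝ) (hM : Mᵀ = M) (hA : Aᵀ = A)
    (p : Fin d → Polynomial ℝ) (a b : ℝ) :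
    (∫ s in a..b,
        (M.mulVec (fun i => ((p i).derivative.derivative).eval s)
            ⬝ᵥ (fun i => ((p i).derivative).eval s)
          + D.mulVec (fun i => ((p i).derivative).eval s)
            ⬝ᵥ (fun i => ((p i).derivative).eval s)
          + A.mulVec (fun i => (p i).eval s) ⬝ᵥ (fun i => ((p i).derivative).eval s)))
    = (∫ s in a..b,
          (fun i => ((p i).derivative).eval s) ⬝ᵥ D.mulVec (fun i => ((p i).derivative).eval s))
      + ((1/2) * ((fun i => ((p i).derivative).eval b)
            ⬝ᵥ M.mulVec (fun i => ((p i).derivative).eval b))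
          + (1/2) * ((fun i => (p i).eval b) ⬝ᵥ A.mulVec (fun i => (p i).eval b)))
      - ((1/2) * ((fun i => ((p i).derivative).eval a)
            ⬝ᵥ M.mulVec (fun i => ((p i).derivative).eval a))
          + (1/2) * ((fun i => (p i).eval a) ⬝ᵥ A.mulVec (fun i => (p i).eval a))) := by
  have hcP : ∀ i, Continuous fun s => (p i).eval s := fun i => (p i).continuous
  have hcP1 : ∀ i, Continuous fun s => ((p i).derivative).eval s :=
    fun i => ((p i).derivative).continuous
  have hcP2 : ∀ i, Continuous fun s => ((p i).derivative.derivative).eval s :=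
    fun i => ((p i).derivative.derivative).continuous
  -- continuity of the two pieces
  have hcD : Continuous fun s =>
      (fun i => ((p i).derivative).eval s) ⬝ᵥ D.mulVec (fun i => ((p i).derivative).eval s) :=
    cont_dotq D _ _ hcP1 hcP1
  have hcG : Continuous fun s =>
      M.mulVec (fun i => ((p i).derivative.derivative).eval s)
          ⬝ᵥ (fun i => ((p i).derivative).eval s)
        + A.mulVec (fun i => (p i).eval s) ⬝ᵥ (fun i => ((p i).derivative).eval s) := by
    have h1 : Continuous fun s =>
        (fun i => ((p i).derivative).eval s)
          ⬝ᵥ M.mulVec (fun i => ((p i).derivative.derivative).eval s) :=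
      cont_dotq M _ _ hcP1 hcP2
    have h2 : Continuous fun s =>
        (fun i => ((p i).derivative).eval s) ⬝ᵥ A.mulVec (fun i => (p i).eval s) :=
      cont_dotq A _ _ hcP1 hcP
    have : (fun s =>
        M.mulVec (fun i => ((p i).derivative.derivative).eval s)
            ⬝ᵥ (fun i => ((p i).derivative).eval s)
          + A.mulVec (fun i => (p i).eval s) ⬝ᵥ (fun i => ((p i).derivative).eval s))
        = fun s =>
        (fun i => ((p i).derivative).eval s)
            ⬝ᵥ M.mulVec (fun i => ((p i).derivative.derivative).eval s)
          + (fun i => ((p i).derivative).eval s) ⬝ᵥ A.mulVec (fun i => (p i).eval s) := by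
      funext s
      rw [dotProduct_comm (M.mulVec _), dotProduct_comm (A.mulVec _)]
    rw [this]
    exact h1.add h2
  -- FTC antiderivative
  have hF : ∀ s : ℝ, HasDerivAt
      (fun s => (1/2) * ((fun i => ((p i).derivative).eval s)
            ⬝ᵥ M.mulVec (fun i => ((p i).derivative).eval s))
          + (1/2) * ((fun i => (p i).eval s) ⬝ᵥ A.mulVec (fun i => (p i).eval s)))
      (M.mulVec (fun i => ((p i).derivative.derivative).eval s)
          ⬝ᵥ (fun i => ((p i).derivative).eval s)
        + A.mulVec (fun i => (p i).eval s) ⬝ᵥ (fun i => ((p i).derivative).eval s)) s := by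
    intro s
    have h1 := hasDerivAt_dotq M (fun s i => ((p i).derivative).eval s)
      (fun s i => ((p i).derivative).eval s)
      (fun i => ((p i).derivative.derivative).eval s)
      (fun i => ((p i).derivative.derivative).eval s) s
      (fun i => ((p i).derivative).hasDerivAt s) (fun i => ((p i).derivative).hasDerivAt s)
    have h2 := hasDerivAt_dotq A (fun s i => (p i).eval s) (fun s i => (p i).eval s)
      (fun i => ((p i).derivative).eval s) (fun i => ((p i).derivative).eval s) s
      (fun i => (p i).hasDerivAt s) (fun i => (p i).hasDerivAt s)
    have h := (h1.const_mul (1/2 : ℝ)).add (h2.const_mul (1/2 : ℝ))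
    refine h.congr_deriv (Eq.symm ?_)
    rw [dotProduct_comm (M.mulVec _), dotProduct_comm (A.mulVec _),
      sym_swap M hM (fun i => ((p i).derivative.derivative).eval s)
        (fun i => ((p i).derivative).eval s),
      sym_swap A hA (fun i => (p i).eval s) (fun i => ((p i).derivative).eval s)]
    ring
  -- split the integrand
  have hsplit : Set.EqOn
      (fun s =>
        M.mulVec (fun i => ((p i).derivative.derivative).eval s)
            ⬝ᵥ (fun i => ((p i).derivative).eval s)
          + D.mulVec (fun i => ((p i).derivative).eval s)
            ⬝ᵥ (fun i => ((p i).derivative).eval s)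
          + A.mulVec (fun i => (p i).eval s) ⬝ᵥ (fun i => ((p i).derivative).eval s))
      (fun s =>
        ((fun i => ((p i).derivative).eval s) ⬝ᵥ D.mulVec (fun i => ((p i).derivative).eval s))
          + (M.mulVec (fun i => ((p i).derivative.derivative).eval s)
              ⬝ᵥ (fun i => ((p i).derivative).eval s)
            + A.mulVec (fun i => (p i).eval s) ⬝ᵥ (fun i => ((p i).derivative).eval s)))
      (Set.uIcc a b) := by
    intro s _
    simp only
    rw [dotProduct_comm (D.mulVec _)]
    ring
  rw [intervalIntegral.integral_congr hsplit,
    intervalIntegral.integral_add (hcD.intervalIntegrable a b) (hcG.intervalIntegrable a b),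
    intervalIntegral.integral_eq_sub_of_hasDerivAt (fun s _ => hF s)
      (hcG.intervalIntegrable a b)]
  ring

private lemma telescope_jump (N : ℕ) (hN : 1 ≤ N)
    (S bM bA : ℝ) (I : ℕ → ℝ) (g gM gA : ℕ → ℕ → ℝ) (j kM kA : ℕ → ℝ)
    (hS : S = ∑ n ∈ Finset.range N, (I n + g n (n+1) - g n n))
    (hg : ∀ m n, g m n = (1/2) * gM m n + (1/2) * gA m n)
    (hbM : bM = gM 0 0) (hbA : bA = gA 0 0)
    (hjk : ∀ n ∈ Finset.Ico 1 N, j n + g (n-1) n - g n n = (1/2) * kM n + (1/2) * kA n) :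
    S + (∑ n ∈ Finset.Ico 1 N, j n) + bM + bA
      = (∑ n ∈ Finset.range N, I n)
        + (1/2) * gM 0 0
        + (1/2) * ∑ n ∈ Finset.Ico 1 N, kM n
        + (1/2) * gM (N-1) N
        + (1/2) * gA 0 0
        + (1/2) * ∑ n ∈ Finset.Ico 1 N, kA n
        + (1/2) * gA (N-1) N := by
  have h1 : ∑ n ∈ Finset.range N, (I n + g n (n+1) - g n n)
      = (∑ n ∈ Finset.range N, I n) + (∑ n ∈ Finset.range N, g n (n+1))
        - ∑ n ∈ Finset.range N, g n n := by
    rw [Finset.sum_sub_distrib, Finset.sum_add_distrib]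
  have h2 : ∑ n ∈ Finset.range N, g n (n+1)
      = (∑ n ∈ Finset.Ico 1 N, g (n-1) n) + g (N-1) N := by
    have e : ∑ n ∈ Finset.range N, g n (n+1) = ∑ n ∈ Finset.Ico 1 (N+1), g (n-1) n := by
      rw [Finset.sum_Ico_eq_sum_range]
      simp only [Nat.add_sub_cancel]
      exact Finset.sum_congr rfl fun i _ => by congr 1 <;> omega
    rw [e, Finset.sum_Ico_succ_top hN]
  have h3 : ∑ n ∈ Finset.range N, g n n = g 0 0 + ∑ n ∈ Finset.Ico 1 N, g n n := by
    rw [Finset.range_eq_Ico, Finset.sum_eq_sum_Ico_succ_bot (by omega : 0 < N)]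
  have h4 : (∑ n ∈ Finset.Ico 1 N, j n) + (∑ n ∈ Finset.Ico 1 N, g (n-1) n)
      - ∑ n ∈ Finset.Ico 1 N, g n n
      = ∑ n ∈ Finset.Ico 1 N, ((1/2) * kM n + (1/2) * kA n) := by
    rw [← Finset.sum_add_distrib, ← Finset.sum_sub_distrib]
    exact Finset.sum_congr rfl fun n hn => by rw [← hjk n hn]
  have h5 : ∑ n ∈ Finset.Ico 1 N, ((1/2) * kM n + (1/2) * kA n)
      = (1/2) * (∑ n ∈ Finset.Ico 1 N, kM n) + (1/2) * ∑ n ∈ Finset.Ico 1 N, kA n := by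
    rw [Finset.sum_add_distrib, Finset.mul_sum, Finset.mul_sum]
  have hg00 := hg 0 0
  have hgN := hg (N-1) N
  rw [hS, h1, h2, h3] at *
  linarith [h4, h5]

end dgAux

/-- The dG2 bilinear form evaluated on the diagonal equals the energy
seminorm.  The slab `I_n = (t n, t (n+1)]` carries the polynomial piece
`u n`; `u(t_n^+) = u n (t n)`, `u(t_n^-) = u (n-1) (t n)`, `u(T^-) =
u (N-1) (t N)`.  Note that `|M^{1/2} y|² = y ⬝ᵥ M y` and the integrand
`|D^{1/2} u'|² = u' ⬝ᵥ D u'`. -/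
theorem stmt3 (d N : ℕ) (hN : 1 ≤ N) (t : ℕ → ℝ)
    (hmono : ∀ n < N, t n < t (n + 1))
    (M D A : Matrix (Fin d) (Fin d) ℝ)
    (hM : M.PosDef) (hA : A.PosDef) (hD : D.PosSemidef)
    (r : ℕ → ℕ) (u : ℕ → ℝ → Fin d → ℝ)
    (hu : ∀ n, ∃ p : Fin d → Polynomial ℝ,
      (∀ i, (p i).natDegree ≤ r n) ∧ ∀ s i, u n s i = (p i).eval s) :
    (∑ n ∈ Finset.range N, ∫ s in (t n)..(t (n + 1)),
          (M.mulVec (deriv (deriv (u n)) s) ⬝ᵥ deriv (u n) s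
            + D.mulVec (deriv (u n) s) ⬝ᵥ deriv (u n) s
            + A.mulVec (u n s) ⬝ᵥ deriv (u n) s))
      + (∑ n ∈ Finset.Ico 1 N,
          (M.mulVec (deriv (u n) (t n) - deriv (u (n - 1)) (t n)) ⬝ᵥ deriv (u n) (t n)
            + A.mulVec (u n (t n) - u (n - 1) (t n)) ⬝ᵥ u n (t n)))
      + M.mulVec (deriv (u 0) (t 0)) ⬝ᵥ deriv (u 0) (t 0)
      + A.mulVec (u 0 (t 0)) ⬝ᵥ u 0 (t 0)
    = (∑ n ∈ Finset.range N, ∫ s in (t n)..(t (n + 1)),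
          deriv (u n) s ⬝ᵥ D.mulVec (deriv (u n) s))
      + (1 / 2) * (deriv (u 0) (t 0) ⬝ᵥ M.mulVec (deriv (u 0) (t 0)))
      + (1 / 2) * ∑ n ∈ Finset.Ico 1 N,
          (deriv (u n) (t n) - deriv (u (n - 1)) (t n)) ⬝ᵥ
            M.mulVec (deriv (u n) (t n) - deriv (u (n - 1)) (t n))
      + (1 / 2) * (deriv (u (N - 1)) (t N) ⬝ᵥ M.mulVec (deriv (u (N - 1)) (t N)))
      + (1 / 2) * (u 0 (t 0) ⬝ᵥ A.mulVec (u 0 (t 0)))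
      + (1 / 2) * ∑ n ∈ Finset.Ico 1 N,
          (u n (t n) - u (n - 1) (t n)) ⬝ᵥ A.mulVec (u n (t n) - u (n - 1) (t n))
      + (1 / 2) * (u (N - 1) (t N) ⬝ᵥ A.mulVec (u (N - 1) (t N)))
    ∧ 0 ≤ (∑ n ∈ Finset.range N, ∫ s in (t n)..(t (n + 1)),
          (M.mulVec (deriv (deriv (u n)) s) ⬝ᵥ deriv (u n) s
            + D.mulVec (deriv (u n) s) ⬝ᵥ deriv (u n) s
            + A.mulVec (u n s) ⬝ᵥ deriv (u n) s))
      + (∑ n ∈ Finset.Ico 1 N,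
          (M.mulVec (deriv (u n) (t n) - deriv (u (n - 1)) (t n)) ⬝ᵥ deriv (u n) (t n)
            + A.mulVec (u n (t n) - u (n - 1) (t n)) ⬝ᵥ u n (t n)))
      + M.mulVec (deriv (u 0) (t 0)) ⬝ᵥ deriv (u 0) (t 0)
      + A.mulVec (u 0 (t 0)) ⬝ᵥ u 0 (t 0) := by
  have hM' : Mᵀ = M := by
    calc Mᵀ = Mᴴ := by ext i j; simp [Matrix.conjTranspose_apply]
    _ = M := hM.1
  have hA' : Aᵀ = A := by
    calc Aᵀ = Aᴴ := by ext i j; simp [Matrix.conjTranspose_apply]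
    _ = A := hA.1
  have quadM : ∀ x : Fin d → ℝ, 0 ≤ x ⬝ᵥ M.mulVec x := fun x => by
    simpa using hM.posSemidef.dotProduct_mulVec_nonneg x
  have quadA : ∀ x : Fin d → ℝ, 0 ≤ x ⬝ᵥ A.mulVec x := fun x => by
    simpa using hA.posSemidef.dotProduct_mulVec_nonneg x
  have quadD : ∀ x : Fin d → ℝ, 0 ≤ x ⬝ᵥ D.mulVec x := fun x => by
    simpa using hD.dotProduct_mulVec_nonneg x
  have heq : (∑ n ∈ Finset.range N, ∫ s in (t n)..(t (n + 1)),
          (M.mulVec (deriv (deriv (u n)) s) ⬝ᵥ deriv (u n) s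
            + D.mulVec (deriv (u n) s) ⬝ᵥ deriv (u n) s
            + A.mulVec (u n s) ⬝ᵥ deriv (u n) s))
      + (∑ n ∈ Finset.Ico 1 N,
          (M.mulVec (deriv (u n) (t n) - deriv (u (n - 1)) (t n)) ⬝ᵥ deriv (u n) (t n)
            + A.mulVec (u n (t n) - u (n - 1) (t n)) ⬝ᵥ u n (t n)))
      + M.mulVec (deriv (u 0) (t 0)) ⬝ᵥ deriv (u 0) (t 0)
      + A.mulVec (u 0 (t 0)) ⬝ᵥ u 0 (t 0)
    = (∑ n ∈ Finset.range N, ∫ s in (t n)..(t (n + 1)),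
          deriv (u n) s ⬝ᵥ D.mulVec (deriv (u n) s))
      + (1 / 2) * (deriv (u 0) (t 0) ⬝ᵥ M.mulVec (deriv (u 0) (t 0)))
      + (1 / 2) * ∑ n ∈ Finset.Ico 1 N,
          (deriv (u n) (t n) - deriv (u (n - 1)) (t n)) ⬝ᵥ
            M.mulVec (deriv (u n) (t n) - deriv (u (n - 1)) (t n))
      + (1 / 2) * (deriv (u (N - 1)) (t N) ⬝ᵥ M.mulVec (deriv (u (N - 1)) (t N)))
      + (1 / 2) * (u 0 (t 0) ⬝ᵥ A.mulVec (u 0 (t 0)))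
      + (1 / 2) * ∑ n ∈ Finset.Ico 1 N,
          (u n (t n) - u (n - 1) (t n)) ⬝ᵥ A.mulVec (u n (t n) - u (n - 1) (t n))
      + (1 / 2) * (u (N - 1) (t N) ⬝ᵥ A.mulVec (u (N - 1) (t N))) := by
    choose p hdeg hval using hu
    have hw : ∀ n, u n = fun s i => (p n i).eval s :=
      fun n => funext fun s => funext fun i => hval n s i
    simp only [hw, deriv_polyvec]
    refine telescope_jump N hN _ _ _
      (fun n => ∫ s in (t n)..(t (n+1)),
        (fun i => ((p n i).derivative).eval s) ⬝ᵥ D.mulVec (fun i => ((p n i).derivative).eval s))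
      (fun m n => (1/2) * ((fun i => ((p m i).derivative).eval (t n))
            ⬝ᵥ M.mulVec (fun i => ((p m i).derivative).eval (t n)))
          + (1/2) * ((fun i => (p m i).eval (t n)) ⬝ᵥ A.mulVec (fun i => (p m i).eval (t n))))
      (fun m n => (fun i => ((p m i).derivative).eval (t n))
            ⬝ᵥ M.mulVec (fun i => ((p m i).derivative).eval (t n)))
      (fun m n => (fun i => (p m i).eval (t n)) ⬝ᵥ A.mulVec (fun i => (p m i).eval (t n)))
      (fun n => M.mulVec ((fun i => ((p n i).derivative).eval (t n))
            - fun i => ((p (n-1) i).derivative).eval (t n))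
          ⬝ᵥ (fun i => ((p n i).derivative).eval (t n))
        + A.mulVec ((fun i => (p n i).eval (t n)) - fun i => (p (n-1) i).eval (t n))
          ⬝ᵥ (fun i => (p n i).eval (t n)))
      (fun n => ((fun i => ((p n i).derivative).eval (t n))
            - fun i => ((p (n-1) i).derivative).eval (t n))
          ⬝ᵥ M.mulVec ((fun i => ((p n i).derivative).eval (t n))
            - fun i => ((p (n-1) i).derivative).eval (t n)))
      (fun n => ((fun i => (p n i).eval (t n)) - fun i => (p (n-1) i).eval (t n))
          ⬝ᵥ A.mulVec ((fun i => (p n i).eval (t n)) - fun i => (p (n-1) i).eval (t n)))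
      ?_ (fun m n => rfl) ?_ ?_ ?_
    · exact Finset.sum_congr rfl fun n _ =>
        interval_id M D A hM' hA' (p n) (t n) (t (n+1))
    · exact dotProduct_comm _ _
    · exact dotProduct_comm _ _
    · intro n _
      have jM := jump_id M hM' (fun i => ((p n i).derivative).eval (t n))
        (fun i => ((p (n-1) i).derivative).eval (t n))
      have jA := jump_id A hA' (fun i => (p n i).eval (t n))
        (fun i => (p (n-1) i).eval (t n))
      linarith [jM, jA]
  refine ⟨heq, ?_⟩
  rw [heq]
  have hI : 0 ≤ ∑ n ∈ Finset.range N, ∫ s in (t n)..(t (n + 1)),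
      deriv (u n) s ⬝ᵥ D.mulVec (deriv (u n) s) :=
    Finset.sum_nonneg fun n hn =>
      intervalIntegral.integral_nonneg (le_of_lt (hmono n (Finset.mem_range.mp hn)))
        (fun s _ => quadD _)
  have half : (0:ℝ) ≤ 1/2 := by norm_num
  refine add_nonneg (add_nonneg (add_nonneg (add_nonneg (add_nonneg (add_nonneg hI
    (mul_nonneg half (quadM _))) (mul_nonneg half (Finset.sum_nonneg fun n _ => quadM _)))
    (mul_nonneg half (quadM _))) (mul_nonneg half (quadA _)))
    (mul_nonneg half (Finset.sum_nonneg fun n _ => quadA _))) (mul_nonneg half (quadA _))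
end

section
/- Under the assumptions that M, A are symmetric positive definite, D symmetric positive semidefinite, if u in the dG space satisfies A(u, w) = 0 for all w in the dG space (where A is the dG2 bilinear form with zero data), then u = 0 on every interval of the partition. In particular, the dG2 discrete problem A(u_dG, w) = F(w) for all w has at most one solution. -/
open Matrix

/-- A family of slab functions is a piecewise polynomial of degree `r n`
on each slab. -/
def IsPwPoly (d : ℕ) (r : ℕ → ℕ) (u : ℕ → ℝ → Fin d → ℝ) : Prop :=
  ∀ n, ∃ p : Fin d → Polynomial ℝ,
    (∀ i, (p i).natDegree ≤ r n) ∧ ∀ s i, u n s i = (p i).eval s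

/-- The dG2 bilinear form `𝒜(u, w)` on the partition with nodes `t n`,
slab `I_n = (t n, t (n+1)]`, for `N` slabs. -/
noncomputable def dgA (d N : ℕ) (t : ℕ → ℝ) (M D A : Matrix (Fin d) (Fin d) ℝ)
    (u w : ℕ → ℝ → Fin d → ℝ) : ℝ :=
  (∑ n ∈ Finset.range N, ∫ s in (t n)..(t (n + 1)),
      (M.mulVec (deriv (deriv (u n)) s) + D.mulVec (deriv (u n) s)
        + A.mulVec (u n s)) ⬝ᵥ deriv (w n) s)
    + (∑ n ∈ Finset.Ico 1 N,
        (M.mulVec (deriv (u n) (t n) - deriv (u (n - 1)) (t n)) ⬝ᵥ deriv (w n) (t n)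
          + A.mulVec (u n (t n) - u (n - 1) (t n)) ⬝ᵥ w n (t n)))
    + M.mulVec (deriv (u 0) (t 0)) ⬝ᵥ deriv (w 0) (t 0)
    + A.mulVec (u 0 (t 0)) ⬝ᵥ w 0 (t 0)


open Polynomial intervalIntegral Set Matrix


noncomputable def PIv (a b : ℝ) (p : ℝ[X]) : ℝ := ∫ s in a..b, p.eval s

lemma PIv_add (a b : ℝ) (p q : ℝ[X]) : PIv a b (p + q) = PIv a b p + PIv a b q := by
  unfold PIv
  simp only [eval_add]
  exact integral_add (p.continuous.intervalIntegrable _ _) (q.continuous.intervalIntegrable _ _)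

lemma PIv_zero (a b : ℝ) : PIv a b 0 = 0 := by simp [PIv]

lemma PIv_C_mul (a b c : ℝ) (p : ℝ[X]) : PIv a b (C c * p) = c * PIv a b p := by
  unfold PIv
  simp only [eval_mul, eval_C]
  exact integral_const_mul c _

lemma PIv_sub (a b : ℝ) (p q : ℝ[X]) : PIv a b (p - q) = PIv a b p - PIv a b q := by
  have h := PIv_add a b (p - q) q
  simp only [sub_add_cancel] at h
  linarith

lemma PIv_sum (a b : ℝ) {ι : Type*} (F : Finset ι) (f : ι → ℝ[X]) :
    PIv a b (∑ i ∈ F, f i) = ∑ i ∈ F, PIv a b (f i) := by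
  classical
  induction F using Finset.induction_on with
  | empty => simp [PIv_zero]
  | @insert x s hx ih => rw [Finset.sum_insert hx, Finset.sum_insert hx, PIv_add, ih]

lemma PIv_deriv (a b : ℝ) (p : ℝ[X]) : PIv a b p.derivative = p.eval b - p.eval a := by
  unfold PIv
  exact integral_eq_sub_of_hasDerivAt (fun x _ => p.hasDerivAt x)
    ((p.derivative.continuous).intervalIntegrable _ _)

lemma PIv_nonneg {a b : ℝ} (hab : a ≤ b) {p : ℝ[X]} (h : ∀ s ∈ Icc a b, 0 ≤ p.eval s) :
    0 ≤ PIv a b p := integral_nonneg hab h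

lemma eq_zero_of_PIv_eq_zero {a b : ℝ} (hab : a < b) {p : ℝ[X]}
    (hnn : ∀ s ∈ Icc a b, 0 ≤ p.eval s) (hz : PIv a b p = 0) : p = 0 := by
  by_contra hp
  have hroot : ∃ c ∈ Ioo a b, p.eval c ≠ 0 := by
    by_contra hall
    push_neg at hall
    exact hp (p.eq_zero_of_infinite_isRoot ((Set.Ioo_infinite hab).mono fun x hx => hall x hx))
  obtain ⟨c, hc, hcne⟩ := hroot
  have hcpos : 0 < p.eval c := lt_of_le_of_ne (hnn c (Ioo_subset_Icc_self hc)) (Ne.symm hcne)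
  have hopen : IsOpen ({x | 0 < p.eval x} ∩ Ioo a b) :=
    (isOpen_lt continuous_const p.continuous).inter isOpen_Ioo
  have hmem : ({x | 0 < p.eval x} ∩ Ioo a b) ∈ nhds c :=
    hopen.mem_nhds ⟨hcpos, hc⟩
  obtain ⟨l, u, hclu, hsub⟩ := mem_nhds_iff_exists_Ioo_subset.mp hmem
  have hlu : l < u := lt_trans hclu.1 hclu.2
  have hsub2 : Ioo l u ⊆ Ioo a b := fun x hx => (hsub hx).2
  have hal : a ≤ l := ((Set.Ioo_subset_Ioo_iff hlu).mp hsub2).1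
  have hub : u ≤ b := ((Set.Ioo_subset_Ioo_iff hlu).mp hsub2).2
  have hposint : 0 < ∫ s in l..u, p.eval s :=
    intervalIntegral_pos_of_pos_on (p.continuous.intervalIntegrable _ _)
      (fun x hx => (hsub hx).1) hlu
  have h1 : 0 ≤ ∫ s in a..l, p.eval s :=
    integral_nonneg hal fun x hx => hnn x ⟨hx.1, le_trans hx.2 (le_trans (le_of_lt hlu) hub)⟩
  have h2 : 0 ≤ ∫ s in u..b, p.eval s :=
    integral_nonneg hub fun x hx => hnn x ⟨le_trans hal (le_trans (le_of_lt hlu) hx.1), hx.2⟩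
  have hsplit1 : (∫ s in a..l, p.eval s) + (∫ s in l..u, p.eval s) = ∫ s in a..u, p.eval s :=
    integral_add_adjacent_intervals (p.continuous.intervalIntegrable _ _)
      (p.continuous.intervalIntegrable _ _)
  have hsplit2 : (∫ s in a..u, p.eval s) + (∫ s in u..b, p.eval s) = ∫ s in a..b, p.eval s :=
    integral_add_adjacent_intervals (p.continuous.intervalIntegrable _ _)
      (p.continuous.intervalIntegrable _ _)
  unfold PIv at hz
  linarith

lemma pow_dvd_derivative {c : ℝ} {n : ℕ} {p : ℝ[X]} (h : (X - C c)^n ∣ p) :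
    (X - C c)^(n-1) ∣ derivative p := by
  obtain ⟨q, rfl⟩ := h
  rw [derivative_mul, derivative_pow, derivative_X_sub_C]
  refine dvd_add ⟨C (n:ℝ) * q, by ring⟩ (Dvd.dvd.mul_right (pow_dvd_pow _ (Nat.sub_le n 1)) _)

lemma pow_dvd_iterate {c : ℝ} {n : ℕ} {p : ℝ[X]} (h : (X - C c)^n ∣ p) (k : ℕ) :
    (X - C c)^(n-k) ∣ derivative^[k] p := by
  induction k with
  | zero => simpa using h
  | succ k ih =>
      rw [Function.iterate_succ_apply', show n - (k+1) = (n - k) - 1 by omega]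
      exact pow_dvd_derivative ih

lemma eval_eq_zero_of_pow_dvd {c : ℝ} {n : ℕ} {p : ℝ[X]} (hn : 1 ≤ n)
    (h : (X - C c)^n ∣ p) : p.eval c = 0 := by
  obtain ⟨q, rfl⟩ := h
  simp [zero_pow (by omega : n ≠ 0)]

/-- Key orthogonality constant lemma. -/
lemma exists_kappa (a b : ℝ) (hab : a < b) (r : ℕ) (hr : 1 ≤ r) :
    ∃ κ : ℝ, 0 ≤ κ ∧ ∀ q g : ℝ[X], q.natDegree ≤ r → g.natDegree ≤ r →
      (∀ k, k < r → PIv a b (q * X^k) = 0) →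
      PIv a b (q * g) = κ * q.coeff r * g.coeff r := by
  set ff : ℝ[X] := ((X - C a) * (X - C b))^r with hff
  have hmon : ff.Monic := ((monic_X_sub_C a).mul (monic_X_sub_C b)).pow r
  have hffdeg : ff.natDegree = 2 * r := by
    rw [hff, Monic.natDegree_pow ((monic_X_sub_C a).mul (monic_X_sub_C b)),
      Monic.natDegree_mul (monic_X_sub_C a) (monic_X_sub_C b)]
    simp [natDegree_X_sub_C]; ring
  set LL : ℝ[X] := derivative^[r] ff with hLL
  -- leading coefficient of LL
  have hLLcoeff : LL.coeff r = ((r + r).descFactorial r : ℝ) := by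
    rw [hLL, coeff_iterate_derivative]
    have : ff.coeff (r + r) = 1 := by
      have : r + r = ff.natDegree := by omega
      rw [this]; exact hmon.coeff_natDegree
    rw [this]
    simp
  have hdesc_pos : (0:ℝ) < ((r + r).descFactorial r : ℝ) := by
    have : (r+r).descFactorial r ≠ 0 := by
      rw [Ne, Nat.descFactorial_eq_zero_iff_lt]; omega
    exact_mod_cast Nat.pos_of_ne_zero this
  have hLLdeg : LL.natDegree ≤ r := by
    calc LL.natDegree ≤ ff.natDegree - r := natDegree_iterate_derivative _ _
    _ ≤ r := by omega
  -- vanishing of derivatives at endpoints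
  have hdvda : (X - C a)^r ∣ ff := by
    rw [hff, mul_pow]; exact Dvd.intro _ rfl
  have hdvdb : (X - C b)^r ∣ ff := by
    rw [hff, mul_pow]; exact Dvd.intro_left _ rfl
  have hvanish : ∀ k, k < r → (derivative^[k] ff).eval a = 0 ∧ (derivative^[k] ff).eval b = 0 := by
    intro k hk
    constructor
    · exact eval_eq_zero_of_pow_dvd (by omega) (pow_dvd_iterate hdvda k)
    · exact eval_eq_zero_of_pow_dvd (by omega) (pow_dvd_iterate hdvdb k)
  -- integration by parts
  have hibp : ∀ k, k ≤ r → ∀ p : ℝ[X],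
      PIv a b (derivative^[k] ff * p) = (-1)^k * PIv a b (ff * derivative^[k] p) := by
    intro k
    induction k with
    | zero => intro _ p; simp
    | succ k ih =>
        intro hk p
        have hk' : k ≤ r := by omega
        have hkr : k < r := by omega
        have hzero : PIv a b (derivative (derivative^[k] ff * p)) = 0 := by
          rw [PIv_deriv]
          simp [eval_mul, (hvanish k hkr).1, (hvanish k hkr).2]
        rw [derivative_mul, PIv_add] at hzero
        rw [Function.iterate_succ_apply']
        have : PIv a b (derivative (derivative^[k] ff) * p)
            = - PIv a b (derivative^[k] ff * derivative p) := by linarith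
        rw [this, ih hk' (derivative p), ← Function.iterate_succ_apply]
        ring
  have hLLorth : ∀ p : ℝ[X], p.natDegree < r → PIv a b (LL * p) = 0 := by
    intro p hp
    rw [hLL, hibp r le_rfl p, iterate_derivative_eq_zero hp, mul_zero, PIv_zero, mul_zero]
  -- value of β
  have hXr : derivative^[r] (X^r : ℝ[X]) = C ((r.factorial : ℝ)) := by
    rw [iterate_derivative_X_pow_eq_C_mul]
    simp [Nat.descFactorial_self]
  have hbeta : PIv a b (LL * X^r) = (-1)^r * (r.factorial : ℝ) * PIv a b ff := by
    rw [hLL, hibp r le_rfl (X^r), hXr]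
    rw [show ff * C ((r.factorial:ℝ)) = C ((r.factorial:ℝ)) * ff by ring, PIv_C_mul]
    ring
  -- sign of (-1)^r * PIv ff
  have hsign : 0 ≤ (-1:ℝ)^r * PIv a b ff := by
    have : (-1:ℝ)^r * PIv a b ff = PIv a b (C ((-1:ℝ)^r) * ff) := by rw [PIv_C_mul]
    rw [this]
    apply integral_nonneg (le_of_lt hab)
    intro s hs
    have : eval s (C ((-1:ℝ)^r) * ff) = ((s - a) * (b - s))^r := by
      simp only [eval_mul, eval_C, hff, eval_pow, eval_sub, eval_X]
      rw [← mul_pow]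
      congr 1
      ring
    rw [this]
    exact pow_nonneg (mul_nonneg (by linarith [hs.1]) (by linarith [hs.2])) r
  set ℓ : ℝ := ((r + r).descFactorial r : ℝ) with hl
  refine ⟨((-1)^r * (r.factorial : ℝ) * PIv a b ff) / ℓ, ?_, ?_⟩
  · have heq : (-1:ℝ)^r * (r.factorial:ℝ) * PIv a b ff
        = (r.factorial:ℝ) * ((-1:ℝ)^r * PIv a b ff) := by ring
    rw [heq]
    exact div_nonneg (mul_nonneg (Nat.cast_nonneg _) hsign) (le_of_lt hdesc_pos)
  intro q g hq hg horth
  set c : ℝ := q.coeff r / ℓ with hc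
  set h : ℝ[X] := q - C c * LL with hh
  have hhcoeff : h.coeff r = 0 := by
    rw [hh]
    simp only [coeff_sub, coeff_C_mul, hLLcoeff]
    rw [hc, hl]
    field_simp
    ring
  have hhdeg : h.natDegree ≤ r - 1 := by
    rw [natDegree_le_iff_coeff_eq_zero]
    intro m hm
    rcases Nat.lt_or_ge r m with hmr | hmr
    · rw [hh]
      simp only [coeff_sub, coeff_C_mul]
      rw [coeff_eq_zero_of_natDegree_lt (lt_of_le_of_lt hq hmr),
        coeff_eq_zero_of_natDegree_lt (lt_of_le_of_lt hLLdeg hmr)]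
      ring
    · have : m = r := by omega
      rw [this]; exact hhcoeff
  have hhorth : ∀ k, k < r → PIv a b (h * X^k) = 0 := by
    intro k hk
    have : h * X^k = q * X^k - C c * (LL * X^k) := by rw [hh]; ring
    rw [this, PIv_sub, PIv_C_mul, horth k hk,
      hLLorth (X^k) (by simpa [natDegree_X_pow] using hk), mul_zero, sub_zero]
  have hhzero : h = 0 := by
    have hlt : h.natDegree < r := by omega
    have hexp : h * h = ∑ k ∈ Finset.range r, C (h.coeff k) * (h * X^k) := by
      conv_lhs => rw [show h * h = h * h by rfl]
      nth_rewrite 2 [h.as_sum_range' r hlt]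
      rw [Finset.mul_sum]
      refine Finset.sum_congr rfl fun k _ => ?_
      rw [← C_mul_X_pow_eq_monomial]
      ring
    have hPI : PIv a b (h * h) = 0 := by
      rw [hexp, PIv_sum]
      refine Finset.sum_eq_zero fun k hk => ?_
      rw [PIv_C_mul, hhorth k (Finset.mem_range.mp hk), mul_zero]
    have := eq_zero_of_PIv_eq_zero hab (fun s _ => by
      rw [eval_mul]; exact mul_self_nonneg _) hPI
    exact mul_self_eq_zero.mp this
  have hqeq : q = C c * LL := sub_eq_zero.mp hhzero
  have hgexp : PIv a b (LL * g) = g.coeff r * PIv a b (LL * X^r) := by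
    nth_rewrite 1 [g.as_sum_range' (r+1) (by omega)]
    rw [Finset.mul_sum, PIv_sum, Finset.sum_range_succ]
    rw [Finset.sum_eq_zero (fun k hk => ?_)]
    · rw [← C_mul_X_pow_eq_monomial,
        show LL * (C (g.coeff r) * X^r) = C (g.coeff r) * (LL * X^r) by ring, PIv_C_mul, zero_add]
    · have hdm : (monomial k (g.coeff k)).natDegree < r :=
        lt_of_le_of_lt (natDegree_monomial_le _) (Finset.mem_range.mp hk)
      exact hLLorth _ hdm
  have hql : q * g = C c * (LL * g) := by rw [hqeq]; ring
  rw [hql, PIv_C_mul, hgexp, hbeta, hc, hl]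
  have hlne : ((r + r).descFactorial r : ℝ) ≠ 0 := ne_of_gt hdesc_pos
  field_simp

variable {d : ℕ}

noncomputable def dotPE (x y : Fin d → ℝ[X]) : ℝ[X] := ∑ i, x i * y i
noncomputable def mulVecP (M : Matrix (Fin d) (Fin d) ℝ) (x : Fin d → ℝ[X]) : Fin d → ℝ[X] :=
  fun i => ∑ j, C (M i j) * x j
noncomputable def dVec (x : Fin d → ℝ[X]) : Fin d → ℝ[X] := fun i => (x i).derivative
noncomputable def QP (M : Matrix (Fin d) (Fin d) ℝ) (x : Fin d → ℝ[X]) : ℝ[X] :=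
  dotPE (mulVecP M x) x
noncomputable def resP (M D A : Matrix (Fin d) (Fin d) ℝ) (v : Fin d → ℝ[X]) : Fin d → ℝ[X] :=
  fun i => mulVecP M (dVec (dVec v)) i + mulVecP D (dVec v) i + mulVecP A v i

lemma dotPE_add_left (x y z : Fin d → ℝ[X]) :
    dotPE (fun i => x i + y i) z = dotPE x z + dotPE y z := by
  simp [dotPE, add_mul, Finset.sum_add_distrib]

lemma dVec_mulVecP (M : Matrix (Fin d) (Fin d) ℝ) (x : Fin d → ℝ[X]) :
    dVec (mulVecP M x) = mulVecP M (dVec x) := by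
  funext i
  simp [dVec, mulVecP, derivative_sum]

lemma derivative_dotPE (x y : Fin d → ℝ[X]) :
    derivative (dotPE x y) = dotPE (dVec x) y + dotPE x (dVec y) := by
  simp [dotPE, derivative_sum, derivative_mul, dVec, Finset.sum_add_distrib]

lemma dotPE_mulVecP_symm {M : Matrix (Fin d) (Fin d) ℝ} (hsym : ∀ i j, M i j = M j i)
    (x y : Fin d → ℝ[X]) : dotPE (mulVecP M x) y = dotPE (mulVecP M y) x := by
  simp only [dotPE, mulVecP, Finset.sum_mul]
  rw [Finset.sum_comm]
  refine Finset.sum_congr rfl fun i _ => Finset.sum_congr rfl fun j _ => ?_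
  rw [hsym j i]; ring

lemma derivative_QP {M : Matrix (Fin d) (Fin d) ℝ} (hsym : ∀ i j, M i j = M j i)
    (x : Fin d → ℝ[X]) :
    derivative (QP M x) = 2 * dotPE (mulVecP M x) (dVec x) := by
  rw [QP, derivative_dotPE, dVec_mulVecP, dotPE_mulVecP_symm hsym (dVec x) x]
  ring

lemma energy_id {M D A : Matrix (Fin d) (Fin d) ℝ} (hsymM : ∀ i j, M i j = M j i)
    (hsymA : ∀ i j, A i j = A j i) (v : Fin d → ℝ[X]) :
    2 * dotPE (resP M D A v) (dVec v)
      = derivative (QP M (dVec v) + QP A v) + 2 * dotPE (mulVecP D (dVec v)) (dVec v) := by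
  have h1 : dotPE (resP M D A v) (dVec v)
      = dotPE (mulVecP M (dVec (dVec v))) (dVec v) + dotPE (mulVecP D (dVec v)) (dVec v)
        + dotPE (mulVecP A v) (dVec v) := by
    show dotPE (fun i => (mulVecP M (dVec (dVec v)) i + mulVecP D (dVec v) i) + mulVecP A v i) (dVec v) = _
    rw [dotPE_add_left, dotPE_add_left]
  have h2 := derivative_QP hsymM (dVec v)
  have h3 := derivative_QP hsymA v
  have h4 : dotPE (mulVecP M (dVec v)) (dVec (dVec v))
      = dotPE (mulVecP M (dVec (dVec v))) (dVec v) := dotPE_mulVecP_symm hsymM _ _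
  rw [derivative_add, h2, h3, h1, ← h4]
  ring

lemma poho_id {M D A : Matrix (Fin d) (Fin d) ℝ} (hsymM : ∀ i j, M i j = M j i)
    (hsymA : ∀ i j, A i j = A j i) (v : Fin d → ℝ[X]) (a : ℝ) :
    2 * ((X - C a) * dotPE (resP M D A v) (dVec v))
      = derivative ((X - C a) * (QP M (dVec v) + QP A v))
        - (QP M (dVec v) + QP A v)
        + 2 * ((X - C a) * dotPE (mulVecP D (dVec v)) (dVec v)) := by
  have h := energy_id (D := D) hsymM hsymA v
  rw [derivative_mul]
  simp only [derivative_sub, derivative_X, derivative_C, sub_zero, one_mul]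
  linear_combination (X - C a : ℝ[X]) * h

lemma eval_QP (M : Matrix (Fin d) (Fin d) ℝ) (x : Fin d → ℝ[X]) (s : ℝ) :
    (QP M x).eval s = (fun i => (x i).eval s) ⬝ᵥ (M.mulVec (fun i => (x i).eval s)) := by
  simp [QP, dotPE, mulVecP, Matrix.mulVec, dotProduct, eval_finset_sum, mul_comm]

lemma eval_QP_nonneg {M : Matrix (Fin d) (Fin d) ℝ} (hM : M.PosSemidef)
    (x : Fin d → ℝ[X]) (s : ℝ) : 0 ≤ (QP M x).eval s := by
  rw [eval_QP]
  simpa using hM.dotProduct_mulVec_nonneg (fun i => (x i).eval s)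

lemma eval_QP_zero_vec {M : Matrix (Fin d) (Fin d) ℝ} (hM : M.PosDef)
    {x : Fin d → ℝ[X]} {s : ℝ} (h : (QP M x).eval s = 0) : ∀ i, (x i).eval s = 0 := by
  by_contra hc
  push_neg at hc
  obtain ⟨i, hi⟩ := hc
  have hx : (fun i => (x i).eval s) ≠ 0 := by
    intro h0
    exact hi (congrFun h0 i)
  have := hM.dotProduct_mulVec_pos hx
  rw [eval_QP] at h
  simp only [star_trivial] at this
  rw [h] at this
  exact lt_irrefl 0 this

lemma natDegree_mulVecP_le {d : ℕ} (M : Matrix (Fin d) (Fin d) ℝ) {x : Fin d → ℝ[X]} {r : ℕ}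
    (hx : ∀ j, (x j).natDegree ≤ r) (i : Fin d) : (mulVecP M x i).natDegree ≤ r :=
  natDegree_sum_le_of_forall_le _ _ fun j _ =>
    le_trans (natDegree_C_mul_le _ _) (hx j)

lemma natDegree_dVec_le {d : ℕ} {x : Fin d → ℝ[X]} {r : ℕ}
    (hx : ∀ j, (x j).natDegree ≤ r) (j : Fin d) : (dVec x j).natDegree ≤ r - 1 :=
  le_trans (natDegree_derivative_le _) (Nat.sub_le_sub_right (hx j) 1)

lemma natDegree_resP_le {d : ℕ} (M D A : Matrix (Fin d) (Fin d) ℝ) {v : Fin d → ℝ[X]} {r : ℕ}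
    (hv : ∀ j, (v j).natDegree ≤ r) (i : Fin d) : (resP M D A v i).natDegree ≤ r := by
  have h1 : ∀ j, (dVec v j).natDegree ≤ r :=
    fun j => le_trans (natDegree_dVec_le hv j) (Nat.sub_le r 1)
  have h2 : ∀ j, (dVec (dVec v) j).natDegree ≤ r :=
    fun j => le_trans (natDegree_dVec_le h1 j) (Nat.sub_le r 1)
  refine le_trans (natDegree_add_le _ _) (max_le (le_trans (natDegree_add_le _ _) (max_le ?_ ?_)) ?_)
  · exact natDegree_mulVecP_le M h2 i
  · exact natDegree_mulVecP_le D h1 i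
  · exact natDegree_mulVecP_le A hv i

lemma coeff_resP {d : ℕ} (M D A : Matrix (Fin d) (Fin d) ℝ) {v : Fin d → ℝ[X]} {r : ℕ}
    (hr : 1 ≤ r) (hv : ∀ j, (v j).natDegree ≤ r) (i : Fin d) :
    (resP M D A v i).coeff r = (A.mulVec (fun j => (v j).coeff r)) i := by
  have hd1 : ∀ j, ((v j).derivative).natDegree < r :=
    fun j => lt_of_le_of_lt (le_trans (natDegree_derivative_le _)
      (Nat.sub_le_sub_right (hv j) 1)) (by omega)
  have hd2 : ∀ j, (((v j).derivative).derivative).natDegree < r := by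
    intro j
    exact lt_of_le_of_lt (le_trans (natDegree_derivative_le _) (Nat.sub_le _ 1)) (hd1 j)
  simp only [resP, coeff_add, mulVecP, finset_sum_coeff, coeff_C_mul, dVec, Matrix.mulVec,
    dotProduct]
  rw [Finset.sum_eq_zero (fun j _ => by rw [coeff_eq_zero_of_natDegree_lt (hd2 j), mul_zero]),
    Finset.sum_eq_zero (fun j _ => by rw [coeff_eq_zero_of_natDegree_lt (hd1 j), mul_zero])]
  simp

/-- The heart: on a single slab, the residual orthogonality plus zero
incoming data forces the polynomial to vanish. -/
lemma slab_zero {d : ℕ} {M D A : Matrix (Fin d) (Fin d) ℝ}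
    (hM : M.PosDef) (hA : A.PosDef) (hD : D.PosSemidef)
    {a b : ℝ} (hab : a < b) (r : ℕ) (v : Fin d → ℝ[X]) (hdeg : ∀ i, (v i).natDegree ≤ r)
    (H : ∀ w : Fin d → ℝ[X], (∀ i, (w i).natDegree ≤ r) →
      PIv a b (dotPE (resP M D A v) (dVec w))
        + (M.mulVec (fun i => ((v i).derivative).eval a)) ⬝ᵥ (fun i => ((w i).derivative).eval a)
        + (A.mulVec (fun i => (v i).eval a)) ⬝ᵥ (fun i => (w i).eval a) = 0) :
    ∀ i, v i = 0 := by
  have hsymM : ∀ i j, M i j = M j i := fun i j => by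
    have h := hM.1.apply i j; simp at h; exact h.symm
  have hsymA : ∀ i j, A i j = A j i := fun i j => by
    have h := hA.1.apply i j; simp at h; exact h.symm
  set φ : ℝ[X] := QP M (dVec v) + QP A v with hφ
  set ψ : ℝ[X] := QP D (dVec v) with hψ
  -- convenient PIv facts
  have PIv_two_mul : ∀ p : ℝ[X], PIv a b (2 * p) = 2 * PIv a b p := by
    intro p
    rw [two_mul, PIv_add]; ring
  -- Step 1 : energy identity
  have hEpoly := energy_id (D := D) hsymM hsymA v
  have hEint : 2 * PIv a b (dotPE (resP M D A v) (dVec v))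
      = (φ.eval b - φ.eval a) + 2 * PIv a b ψ := by
    have := congrArg (PIv a b) hEpoly
    rwa [PIv_two_mul, PIv_add, PIv_deriv, PIv_two_mul] at this
  have hHv := H v hdeg
  -- rewrite the node terms as evaluations of QP
  have hnodeM : (M.mulVec (fun i => ((v i).derivative).eval a)) ⬝ᵥ
      (fun i => ((v i).derivative).eval a) = (QP M (dVec v)).eval a := by
    rw [eval_QP, dotProduct_comm]; rfl
  have hnodeA : (A.mulVec (fun i => (v i).eval a)) ⬝ᵥ (fun i => (v i).eval a)
      = (QP A v).eval a := by
    rw [eval_QP, dotProduct_comm]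
  have hever : φ.eval b + φ.eval a + 2 * PIv a b ψ = 0 := by
    rw [hnodeM, hnodeA] at hHv
    have hφa : φ.eval a = (QP M (dVec v)).eval a + (QP A v).eval a := by
      rw [hφ, eval_add]
    -- 2 * PIv dot = φ(b) - φ(a) + 2 PIv ψ and PIv dot = -(φ(a))
    have : PIv a b (dotPE (resP M D A v) (dVec v)) = -((QP M (dVec v)).eval a + (QP A v).eval a) := by
      linarith
    rw [hφa]
    linarith [hEint, this]
  have hMb : 0 ≤ (QP M (dVec v)).eval b := eval_QP_nonneg hM.posSemidef _ b
  have hAb : 0 ≤ (QP A v).eval b := eval_QP_nonneg hA.posSemidef _ b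
  have hMa : 0 ≤ (QP M (dVec v)).eval a := eval_QP_nonneg hM.posSemidef _ a
  have hAa : 0 ≤ (QP A v).eval a := eval_QP_nonneg hA.posSemidef _ a
  have hψnn : 0 ≤ PIv a b ψ :=
    PIv_nonneg (le_of_lt hab) (fun s _ => eval_QP_nonneg hD _ s)
  have hφb' : φ.eval b = (QP M (dVec v)).eval b + (QP A v).eval b := by rw [hφ, eval_add]
  have hφa' : φ.eval a = (QP M (dVec v)).eval a + (QP A v).eval a := by rw [hφ, eval_add]
  have hMbz : (QP M (dVec v)).eval b = 0 := by rw [hφb', hφa'] at hever; linarith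
  have hAbz : (QP A v).eval b = 0 := by rw [hφb', hφa'] at hever; linarith
  have hMaz : (QP M (dVec v)).eval a = 0 := by rw [hφb', hφa'] at hever; linarith
  have hAaz : (QP A v).eval a = 0 := by rw [hφb', hφa'] at hever; linarith
  have hψz : PIv a b ψ = 0 := by rw [hφb', hφa'] at hever; linarith
  have hψ0 : ψ = 0 :=
    eq_zero_of_PIv_eq_zero hab (fun s _ => eval_QP_nonneg hD _ s) hψz
  have hva : ∀ i, (v i).eval a = 0 := eval_QP_zero_vec hA hAaz
  have hdva : ∀ i, ((v i).derivative).eval a = 0 := eval_QP_zero_vec hM hMaz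
  have hvb : ∀ i, (v i).eval b = 0 := eval_QP_zero_vec hA hAbz
  have hdvb : ∀ i, ((v i).derivative).eval b = 0 := eval_QP_zero_vec hM hMbz
  -- vectors of incoming traces are zero
  have hvavec : (fun i => (v i).eval a) = (0 : Fin d → ℝ) := funext hva
  have hdvavec : (fun i => ((v i).derivative).eval a) = (0 : Fin d → ℝ) := funext hdva
  -- Step 2 : orthogonality of the residual
  have horth : ∀ i₀ : Fin d, ∀ k, k < r → PIv a b (resP M D A v i₀ * X^k) = 0 := by
    intro i₀ k hk
    set w : Fin d → ℝ[X] := fun i => if i = i₀ then X^(k+1) else 0 with hw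
    have hwdeg : ∀ i, (w i).natDegree ≤ r := by
      intro i
      rw [hw]
      dsimp only
      split
      · rw [natDegree_X_pow]; omega
      · exact le_trans (le_of_eq natDegree_zero) (Nat.zero_le r)
    have hHw := H w hwdeg
    rw [hvavec, hdvavec, Matrix.mulVec_zero, Matrix.mulVec_zero, zero_dotProduct,
      zero_dotProduct] at hHw
    have hdot : dotPE (resP M D A v) (dVec w)
        = C ((k:ℝ)+1) * (resP M D A v i₀ * X^k) := by
      rw [dotPE]
      rw [Finset.sum_eq_single i₀]
      · rw [hw]; dsimp only [dVec]
        rw [if_pos rfl, derivative_X_pow, Nat.add_sub_cancel]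
        push_cast
        ring
      · intro j _ hj
        rw [hw]; dsimp only [dVec]
        rw [if_neg hj, derivative_zero, mul_zero]
      · intro hni
        exact absurd (Finset.mem_univ i₀) hni
    rw [hdot, PIv_C_mul] at hHw
    have hkne : ((k:ℝ)+1) ≠ 0 := by positivity
    have h2 : ((k:ℝ)+1) * PIv a b (resP M D A v i₀ * X^k) = 0 := by linarith
    exact (mul_eq_zero.mp h2).resolve_left hkne
  -- case r = 0
  rcases Nat.eq_zero_or_pos r with hr0 | hrpos
  · intro i
    have := hdeg i
    rw [hr0] at this
    have hC := eq_C_of_natDegree_le_zero this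
    have := hva i
    rw [hC] at this ⊢
    simp only [eval_C] at this
    rw [this, map_zero]
  -- case r ≥ 1
  obtain ⟨κ, hκnn, hκ⟩ := exists_kappa a b hab r hrpos
  set vr : Fin d → ℝ := fun j => (v j).coeff r with hvr
  -- Pohozaev
  have hPpoly := poho_id (D := D) hsymM hsymA v a
  have hφbz : φ.eval b = 0 := by rw [hφ, eval_add, hMbz, hAbz, add_zero]
  have hP1 : PIv a b (derivative ((X - C a) * φ)) = 0 := by
    rw [PIv_deriv]
    simp [eval_mul, hφbz]
  have hP2 : PIv a b (2 * ((X - C a) * ψ)) = 0 := by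
    rw [hψ0, mul_zero, mul_zero, PIv_zero]
  have hPint : 2 * PIv a b ((X - C a) * dotPE (resP M D A v) (dVec v))
      = - PIv a b φ := by
    have := congrArg (PIv a b) hPpoly
    rw [PIv_two_mul] at this
    rw [show derivative ((X - C a) * (QP M (dVec v) + QP A v))
          - (QP M (dVec v) + QP A v)
          + 2 * ((X - C a) * dotPE (mulVecP D (dVec v)) (dVec v))
        = derivative ((X - C a) * φ) - φ + 2 * ((X - C a) * ψ) from rfl] at this
    rw [PIv_add, PIv_sub, hP1, hP2] at this
    linarith [this]
  -- evaluate the left side by orthogonality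
  have hgdeg : ∀ i, ((X - C a) * (v i).derivative).natDegree ≤ r := by
    intro i
    refine le_trans (natDegree_mul_le) ?_
    rw [natDegree_X_sub_C]
    have := natDegree_dVec_le hdeg i
    rw [dVec] at this
    omega
  have hgcoeff : ∀ i, ((X - C a) * (v i).derivative).coeff r = (r:ℝ) * vr i := by
    intro i
    have hre : r = (r - 1) + 1 := by omega
    rw [sub_mul, coeff_sub]
    rw [hre, coeff_X_mul, coeff_C_mul, coeff_derivative,
      coeff_eq_zero_of_natDegree_lt (lt_of_le_of_lt (natDegree_derivative_le _)
        (by have := hdeg i; omega : (v i).natDegree - 1 < (r-1) + 1))]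
    rw [← hre]
    push_cast
    have hc : ((r-1 : ℕ):ℝ) = (r:ℝ) - 1 := by
      rw [Nat.cast_sub hrpos, Nat.cast_one]
    rw [hc]
    ring
  have hLHS : PIv a b ((X - C a) * dotPE (resP M D A v) (dVec v))
      = κ * (r:ℝ) * ((A.mulVec vr) ⬝ᵥ vr) := by
    rw [dotPE, Finset.mul_sum, PIv_sum]
    have : ∀ i : Fin d, PIv a b ((X - C a) * (resP M D A v i * dVec v i))
        = κ * ((A.mulVec vr) i) * ((r:ℝ) * vr i) := by
      intro i
      rw [show (X - C a) * (resP M D A v i * dVec v i)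
          = resP M D A v i * ((X - C a) * (v i).derivative) from by rw [dVec]; ring]
      rw [hκ _ _ (natDegree_resP_le M D A hdeg i) (hgdeg i) (horth i),
        coeff_resP M D A hrpos hdeg i, hgcoeff i]
    rw [Finset.sum_congr rfl (fun i _ => this i)]
    rw [dotProduct]
    rw [Finset.mul_sum]
    refine Finset.sum_congr rfl fun i _ => ?_
    ring
  have hvrnn : 0 ≤ (A.mulVec vr) ⬝ᵥ vr := by
    rw [dotProduct_comm]
    simpa using hA.posSemidef.dotProduct_mulVec_nonneg vr
  have hφnn : 0 ≤ PIv a b φ := PIv_nonneg (le_of_lt hab)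
    (fun s _ => by
      rw [hφ, eval_add]
      exact add_nonneg (eval_QP_nonneg hM.posSemidef _ s) (eval_QP_nonneg hA.posSemidef _ s))
  have hφz : PIv a b φ = 0 := by
    have h1 : 0 ≤ 2 * (κ * (r:ℝ) * ((A.mulVec vr) ⬝ᵥ vr)) := by positivity
    rw [hLHS] at hPint
    linarith
  have hφ0 : φ = 0 := eq_zero_of_PIv_eq_zero hab
    (fun s _ => by
      rw [hφ, eval_add]
      exact add_nonneg (eval_QP_nonneg hM.posSemidef _ s) (eval_QP_nonneg hA.posSemidef _ s)) hφz
  have hvzero : ∀ s : ℝ, ∀ i, (v i).eval s = 0 := by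
    intro s
    have h0 : φ.eval s = 0 := by rw [hφ0]; simp
    rw [hφ, eval_add] at h0
    have h1 := eval_QP_nonneg hM.posSemidef (dVec v) s
    have h2 := eval_QP_nonneg hA.posSemidef v s
    exact eval_QP_zero_vec hA (by linarith)
  intro i
  exact Polynomial.funext fun s => by rw [hvzero s i]; simp

noncomputable def jmp (d : ℕ) (t : ℕ → ℝ) (M A : Matrix (Fin d) (Fin d) ℝ)
    (P Q : ℕ → Fin d → Polynomial ℝ) (n : ℕ) : ℝ :=
  M.mulVec ((fun i => ((P n i).derivative).eval (t n))
      - (fun i => ((P (n-1) i).derivative).eval (t n)))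
    ⬝ᵥ (fun i => ((Q n i).derivative).eval (t n))
  + A.mulVec ((fun i => (P n i).eval (t n)) - (fun i => (P (n-1) i).eval (t n)))
    ⬝ᵥ (fun i => (Q n i).eval (t n))

noncomputable def dgF (d N : ℕ) (t : ℕ → ℝ) (M D A : Matrix (Fin d) (Fin d) ℝ)
    (P Q : ℕ → Fin d → Polynomial ℝ) : ℝ :=
  (∑ n ∈ Finset.range N, PIv (t n) (t (n + 1)) (dotPE (resP M D A (P n)) (dVec (Q n))))
    + (∑ n ∈ Finset.Ico 1 N, jmp d t M A P Q n)
    + M.mulVec (fun i => ((P 0 i).derivative).eval (t 0))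
        ⬝ᵥ (fun i => ((Q 0 i).derivative).eval (t 0))
    + A.mulVec (fun i => (P 0 i).eval (t 0)) ⬝ᵥ (fun i => (Q 0 i).eval (t 0))

lemma eval_mulVecP {d : ℕ} (M : Matrix (Fin d) (Fin d) ℝ) (x : Fin d → ℝ[X]) (s : ℝ) (i : Fin d) :
    eval s (mulVecP M x i) = (M.mulVec (fun j => eval s (x j))) i := by
  simp [mulVecP, Matrix.mulVec, dotProduct, eval_finset_sum]

lemma eval_dotPE' {d : ℕ} (x y : Fin d → ℝ[X]) (s : ℝ) :
    eval s (dotPE x y) = (fun i => eval s (x i)) ⬝ᵥ (fun i => eval s (y i)) := by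
  simp [dotPE, dotProduct, eval_finset_sum]

lemma eval_dot_form {d : ℕ} (M D A : Matrix (Fin d) (Fin d) ℝ) (p q : Fin d → ℝ[X]) (s : ℝ) :
    eval s (dotPE (resP M D A p) (dVec q))
      = (M.mulVec (fun i => eval s ((p i).derivative.derivative))
          + D.mulVec (fun i => eval s ((p i).derivative))
          + A.mulVec (fun i => eval s (p i))) ⬝ᵥ (fun i => eval s ((q i).derivative)) := by
  rw [eval_dotPE']
  congr 1
  funext i
  simp only [resP, eval_add, eval_mulVecP, dVec, Pi.add_apply]

lemma dgA_eq (d N : ℕ) (t : ℕ → ℝ) (M D A : Matrix (Fin d) (Fin d) ℝ)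
    (u w : ℕ → ℝ → Fin d → ℝ) (P Q : ℕ → Fin d → Polynomial ℝ)
    (hu : ∀ n s i, u n s i = (P n i).eval s) (hw : ∀ n s i, w n s i = (Q n i).eval s) :
    dgA d N t M D A u w = dgF d N t M D A P Q := by
  have hufun : ∀ n, u n = fun s i => eval s (P n i) :=
    fun n => funext fun s => funext fun i => hu n s i
  have hwfun : ∀ n, w n = fun s i => eval s (Q n i) :=
    fun n => funext fun s => funext fun i => hw n s i
  have hud : ∀ n, deriv (u n) = fun s i => eval s ((P n i).derivative) := by
    intro n
    funext s
    rw [hufun n]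
    exact (hasDerivAt_pi.mpr (fun i => (P n i).hasDerivAt s)).deriv
  have hudd : ∀ n, deriv (deriv (u n)) = fun s i => eval s ((P n i).derivative.derivative) := by
    intro n
    funext s
    rw [hud n]
    exact (hasDerivAt_pi.mpr (fun i => (P n i).derivative.hasDerivAt s)).deriv
  have hwd : ∀ n, deriv (w n) = fun s i => eval s ((Q n i).derivative) := by
    intro n
    funext s
    rw [hwfun n]
    exact (hasDerivAt_pi.mpr (fun i => (Q n i).hasDerivAt s)).deriv
  rw [dgA, dgF]
  congr 1
  congr 1
  congr 1
  · refine Finset.sum_congr rfl fun n _ => ?_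
    simp only [hudd]
    simp only [hud]
    simp only [hwd]
    simp only [hufun]
    rw [PIv]
    apply intervalIntegral.integral_congr
    intro s _
    exact (eval_dot_form M D A (P n) (Q n) s).symm
  · refine Finset.sum_congr rfl fun n _ => ?_
    simp only [hud]
    simp only [hwd]
    simp only [hufun, hwfun]
    rw [jmp]
  · simp only [hud]
    simp only [hwd]
  · simp only [hufun, hwfun]

lemma resP_sub {d : ℕ} (M D A : Matrix (Fin d) (Fin d) ℝ) (p q : Fin d → ℝ[X]) (i : Fin d) :
    resP M D A (fun j => p j - q j) i = resP M D A p i - resP M D A q i := by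
  simp only [resP, mulVecP, dVec, derivative_sub, mul_sub, Finset.sum_sub_distrib]
  ring

lemma dotPE_sub_left {d : ℕ} (x y z : Fin d → ℝ[X]) :
    dotPE (fun i => x i - y i) z = dotPE x z - dotPE y z := by
  simp [dotPE, sub_mul, Finset.sum_sub_distrib]

lemma mulVec_sub_dot {d : ℕ} (B : Matrix (Fin d) (Fin d) ℝ) (x y z : Fin d → ℝ) :
    B.mulVec (x - y) ⬝ᵥ z = B.mulVec x ⬝ᵥ z - B.mulVec y ⬝ᵥ z := by
  rw [Matrix.mulVec_sub, sub_dotProduct]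

lemma jmp_sub (d : ℕ) (t : ℕ → ℝ) (M A : Matrix (Fin d) (Fin d) ℝ)
    (P₁ P₂ Q : ℕ → Fin d → Polynomial ℝ) (n : ℕ) :
    jmp d t M A (fun m i => P₁ m i - P₂ m i) Q n
      = jmp d t M A P₁ Q n - jmp d t M A P₂ Q n := by
  rw [jmp, jmp, jmp]
  have e1 : ((fun i => (((P₁ n i - P₂ n i)).derivative).eval (t n))
        - (fun i => (((P₁ (n-1) i - P₂ (n-1) i)).derivative).eval (t n)))
      = (((fun i => ((P₁ n i).derivative).eval (t n))
          - (fun i => ((P₁ (n-1) i).derivative).eval (t n)))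
        - ((fun i => ((P₂ n i).derivative).eval (t n))
          - (fun i => ((P₂ (n-1) i).derivative).eval (t n)))) := by
    funext i
    simp only [Pi.sub_apply, derivative_sub, eval_sub]
    ring
  have e2 : ((fun i => (P₁ n i - P₂ n i).eval (t n))
        - (fun i => (P₁ (n-1) i - P₂ (n-1) i).eval (t n)))
      = (((fun i => (P₁ n i).eval (t n)) - (fun i => (P₁ (n-1) i).eval (t n)))
        - ((fun i => (P₂ n i).eval (t n)) - (fun i => (P₂ (n-1) i).eval (t n)))) := by
    funext i
    simp only [Pi.sub_apply, eval_sub]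
    ring
  rw [e1, e2]
  simp only [mulVec_sub_dot]
  ring

lemma dgF_sub (d N : ℕ) (t : ℕ → ℝ) (M D A : Matrix (Fin d) (Fin d) ℝ)
    (P₁ P₂ Q : ℕ → Fin d → Polynomial ℝ) :
    dgF d N t M D A (fun n i => P₁ n i - P₂ n i) Q
      = dgF d N t M D A P₁ Q - dgF d N t M D A P₂ Q := by
  rw [dgF, dgF, dgF]
  have hint : ∀ n, PIv (t n) (t (n+1))
      (dotPE (resP M D A (fun i => P₁ n i - P₂ n i)) (dVec (Q n)))
      = PIv (t n) (t (n+1)) (dotPE (resP M D A (P₁ n)) (dVec (Q n)))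
        - PIv (t n) (t (n+1)) (dotPE (resP M D A (P₂ n)) (dVec (Q n))) := by
    intro n
    rw [← PIv_sub, ← dotPE_sub_left]
    congr 1
    exact congrArg (fun z => dotPE z (dVec (Q n)))
      (funext fun i => resP_sub M D A (P₁ n) (P₂ n) i)
  have eM0 : ((fun i => ((P₁ 0 i - P₂ 0 i)).derivative.eval (t 0)))
      = ((fun i => ((P₁ 0 i).derivative).eval (t 0))
        - (fun i => ((P₂ 0 i).derivative).eval (t 0))) := by
    funext i
    simp only [Pi.sub_apply, derivative_sub, eval_sub]
  have eA0 : ((fun i => (P₁ 0 i - P₂ 0 i).eval (t 0)))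
      = ((fun i => (P₁ 0 i).eval (t 0)) - (fun i => (P₂ 0 i).eval (t 0))) := by
    funext i
    simp only [Pi.sub_apply, eval_sub]
  rw [Finset.sum_congr rfl (fun n _ => hint n),
    Finset.sum_congr rfl (fun n _ => jmp_sub d t M A P₁ P₂ Q n),
    Finset.sum_sub_distrib, Finset.sum_sub_distrib, eM0, eA0]
  simp only [mulVec_sub_dot]
  ring


/-- Uniqueness of the dG2 discrete solution: if two piecewise polynomials
produce the same value of the dG2 bilinear form against every test
function of the dG space (i.e. both solve `𝒜(u, w) = F(w)` for all `w`),
then they coincide on every interval of the partition.  In particular,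
if `𝒜(u, w) = 0` for all `w` (zero data), then `u = 0` on every interval. -/
theorem stmt4 (d N : ℕ) (hN : 1 ≤ N) (t : ℕ → ℝ)
    (hmono : ∀ n < N, t n < t (n + 1))
    (M D A : Matrix (Fin d) (Fin d) ℝ)
    (hM : M.PosDef) (hA : A.PosDef) (hD : D.PosSemidef)
    (r : ℕ → ℕ) (u₁ u₂ : ℕ → ℝ → Fin d → ℝ)
    (hu₁ : IsPwPoly d r u₁) (hu₂ : IsPwPoly d r u₂)
    (hsol : ∀ w : ℕ → ℝ → Fin d → ℝ, IsPwPoly d r w →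
      dgA d N t M D A u₁ w = dgA d N t M D A u₂ w) :
    ∀ n < N, ∀ s ∈ Set.Icc (t n) (t (n + 1)), u₁ n s = u₂ n s := by

  classical
  choose P₁ hP₁ using hu₁
  choose P₂ hP₂ using hu₂
  have key : ∀ n, n < N → ∀ i, P₁ n i - P₂ n i = 0 := by
    intro n
    induction n using Nat.strong_induction_on with
    | _ n IH =>
      intro hnN
      have hab := hmono n hnN
      refine slab_zero hM hA hD hab (r n) (fun i => P₁ n i - P₂ n i)
        (fun i => le_trans (natDegree_sub_le _ _) (max_le ((hP₁ n).1 i) ((hP₂ n).1 i))) ?_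
      intro w hw
      set Q : ℕ → Fin d → Polynomial ℝ := fun m => if m = n then w else fun _ => 0 with hQ
      set W : ℕ → ℝ → Fin d → ℝ := fun m s i => (Q m i).eval s with hWdef
      have hWpw : IsPwPoly d r W := by
        intro m
        refine ⟨Q m, ?_, fun s i => rfl⟩
        intro i
        rw [hQ]
        dsimp only
        split
        · next h => subst h; exact hw i
        · exact le_trans (le_of_eq natDegree_zero) (Nat.zero_le _)
      have h1 := dgA_eq d N t M D A u₁ W P₁ Q (fun m s i => (hP₁ m).2 s i) (fun m s i => rfl)
      have h2 := dgA_eq d N t M D A u₂ W P₂ Q (fun m s i => (hP₂ m).2 s i) (fun m s i => rfl)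
      have h3 : dgF d N t M D A (fun m i => P₁ m i - P₂ m i) Q = 0 := by
        rw [dgF_sub, ← h1, ← h2, hsol W hWpw]
        ring
      rw [dgF] at h3
      have hQn : Q n = w := by rw [hQ]; simp
      have hQm0 : ∀ m, m ≠ n → Q m = fun _ => (0 : Polynomial ℝ) := by
        intro m hmn
        rw [hQ]
        simp [hmn]
      have hS1 : (∑ m ∈ Finset.range N,
          PIv (t m) (t (m+1)) (dotPE (resP M D A (fun i => P₁ m i - P₂ m i)) (dVec (Q m))))
          = PIv (t n) (t (n+1)) (dotPE (resP M D A (fun i => P₁ n i - P₂ n i)) (dVec w)) := by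
        rw [Finset.sum_eq_single n]
        · rw [hQn]
        · intro m _ hmn
          rw [hQm0 m hmn]
          have hz : dotPE (resP M D A (fun i => P₁ m i - P₂ m i))
              (dVec (fun _ => (0:Polynomial ℝ))) = 0 := by
            simp [dotPE, dVec]
          rw [hz, PIv_zero]
        · intro hn
          exact absurd (Finset.mem_range.mpr hnN) hn
      have hjmpz : ∀ m, m ≠ n → jmp d t M A (fun k i => P₁ k i - P₂ k i) Q m = 0 := by
        intro m hmn
        rw [jmp, hQm0 m hmn]
        have z1 : (fun i => (((fun _ => (0:Polynomial ℝ)) i).derivative).eval (t m))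
            = (0 : Fin d → ℝ) := by
          funext i; simp
        have z2 : (fun i => ((fun _ => (0:Polynomial ℝ)) i).eval (t m)) = (0 : Fin d → ℝ) := by
          funext i; simp
        rw [z1, z2, dotProduct_zero, dotProduct_zero, add_zero]
      rcases Nat.eq_zero_or_pos n with hn0 | hnpos
      · subst hn0
        have hS2 : (∑ m ∈ Finset.Ico 1 N, jmp d t M A (fun k i => P₁ k i - P₂ k i) Q m) = 0 :=
          Finset.sum_eq_zero fun m hm => hjmpz m (by
            have := (Finset.mem_Ico.mp hm).1; omega)
        rw [hS1, hS2, hQn] at h3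
        have hd0 : (fun i => ((P₁ 0 i - P₂ 0 i).derivative).eval (t 0))
            = (fun i => (((fun j => P₁ 0 j - P₂ 0 j) i)).derivative.eval (t 0)) := rfl
        rw [add_zero] at h3
        exact h3
      · have hS2 : (∑ m ∈ Finset.Ico 1 N, jmp d t M A (fun k i => P₁ k i - P₂ k i) Q m)
            = M.mulVec (fun i => ((P₁ n i - P₂ n i).derivative).eval (t n))
                ⬝ᵥ (fun i => ((w i).derivative).eval (t n))
              + A.mulVec (fun i => (P₁ n i - P₂ n i).eval (t n)) ⬝ᵥ (fun i => (w i).eval (t n)) := by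
          rw [Finset.sum_eq_single n]
          · rw [jmp, hQn]
            have hprev : ∀ i, P₁ (n-1) i - P₂ (n-1) i = 0 :=
              IH (n-1) (by omega) (by omega)
            have z1 : (fun i => ((P₁ (n-1) i - P₂ (n-1) i).derivative).eval (t n))
                = (0 : Fin d → ℝ) := by
              funext i; rw [hprev i]; simp
            have z2 : (fun i => (P₁ (n-1) i - P₂ (n-1) i).eval (t n)) = (0 : Fin d → ℝ) := by
              funext i; rw [hprev i]; simp
            rw [z1, z2, sub_zero, sub_zero]
          · intro m _ hmn
            exact hjmpz m hmn
          · intro hn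
            exact absurd (Finset.mem_Ico.mpr ⟨hnpos, hnN⟩) hn
        have hQ0 : Q 0 = fun _ => (0 : Polynomial ℝ) := hQm0 0 (by omega)
        have hend1 : M.mulVec (fun i => ((P₁ 0 i - P₂ 0 i).derivative).eval (t 0))
            ⬝ᵥ (fun i => ((Q 0 i).derivative).eval (t 0)) = 0 := by
          rw [hQ0]
          have : (fun i => (((fun _ => (0:Polynomial ℝ)) i).derivative).eval (t 0))
              = (0 : Fin d → ℝ) := by funext i; simp
          rw [this, dotProduct_zero]
        have hend2 : A.mulVec (fun i => (P₁ 0 i - P₂ 0 i).eval (t 0))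
            ⬝ᵥ (fun i => (Q 0 i).eval (t 0)) = 0 := by
          rw [hQ0]
          have : (fun i => ((fun _ => (0:Polynomial ℝ)) i).eval (t 0)) = (0 : Fin d → ℝ) := by
            funext i; simp
          rw [this, dotProduct_zero]
        rw [hS1, hS2, hend1, hend2] at h3
        rw [add_zero, add_zero] at h3
        rw [← add_assoc] at h3
        exact h3
  intro n hn s _
  funext i
  rw [(hP₁ n).2 s i, (hP₂ n).2 s i]
  have := key n hn i
  rw [sub_eq_zero] at this
  rw [this]
end

section
/- Let M, D, A be symmetric real N×N matrices with M, D positive definite and A positive semidefinite. For pairs (u,v) of piecewise polynomials in V_dG × V_dG, define B((u,v),(w,z)) as the dG1 bilinear form. Then B((u,v),(A u, v)) = Σ_n ∫_{I_n}|D^{1/2}v|² dt + ½|M^{1/2}v(0^+)|² + ½Σ_{n=1}^{N-1}|M^{1/2}[v]_n|² + ½|M^{1/2}v(T^-)|² + ½|A^{1/2}u(0^+)|² + ½Σ_{n=1}^{N-1}|A^{1/2}[u]_n|² + ½|A^{1/2}u(T^-)|², and this quantity is nonnegative. -/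
open Matrix

/-- The dG1 bilinear form `ℬ((u,v),(w,z))` on a partition with nodes `t n`
and `N` slabs `I_n = (t n, t (n+1)]`. -/
noncomputable def dgB (d N : ℕ) (t : ℕ → ℝ) (M D A : Matrix (Fin d) (Fin d) ℝ)
    (u v w z : ℕ → ℝ → Fin d → ℝ) : ℝ :=
  (∑ n ∈ Finset.range N, ∫ s in (t n)..(t (n + 1)),
      (deriv (u n) s - v n s) ⬝ᵥ w n s)
    + (∑ n ∈ Finset.Ico 1 N, (u n (t n) - u (n - 1) (t n)) ⬝ᵥ w n (t n))
    + u 0 (t 0) ⬝ᵥ w 0 (t 0)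
    + (∑ n ∈ Finset.range N, ∫ s in (t n)..(t (n + 1)),
        (M.mulVec (deriv (v n) s) + D.mulVec (v n s) + A.mulVec (u n s)) ⬝ᵥ z n s)
    + (∑ n ∈ Finset.Ico 1 N, M.mulVec (v n (t n) - v (n - 1) (t n)) ⬝ᵥ z n (t n))
    + M.mulVec (v 0 (t 0)) ⬝ᵥ z 0 (t 0)

/-- The dG1 energy seminorm squared `|(u,v)|_ℬ²`; note
`|M^{1/2} y|² = y ⬝ᵥ M y`, `|A^{1/2} y|² = y ⬝ᵥ A y` and the integrand
`|D^{1/2} v|² = v ⬝ᵥ D v`. -/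
noncomputable def rhoSq (d N : ℕ) (t : ℕ → ℝ) (M D A : Matrix (Fin d) (Fin d) ℝ)
    (u v : ℕ → ℝ → Fin d → ℝ) : ℝ :=
  (∑ n ∈ Finset.range N, ∫ s in (t n)..(t (n + 1)), v n s ⬝ᵥ D.mulVec (v n s))
    + (1 / 2) * (v 0 (t 0) ⬝ᵥ M.mulVec (v 0 (t 0)))
    + (1 / 2) * ∑ n ∈ Finset.Ico 1 N,
        (v n (t n) - v (n - 1) (t n)) ⬝ᵥ M.mulVec (v n (t n) - v (n - 1) (t n))
    + (1 / 2) * (v (N - 1) (t N) ⬝ᵥ M.mulVec (v (N - 1) (t N)))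
    + (1 / 2) * (u 0 (t 0) ⬝ᵥ A.mulVec (u 0 (t 0)))
    + (1 / 2) * ∑ n ∈ Finset.Ico 1 N,
        (u n (t n) - u (n - 1) (t n)) ⬝ᵥ A.mulVec (u n (t n) - u (n - 1) (t n))
    + (1 / 2) * (u (N - 1) (t N) ⬝ᵥ A.mulVec (u (N - 1) (t N)))

variable {d : ℕ}

lemma symm_dot {S : Matrix (Fin d) (Fin d) ℝ} (hS : Sᵀ = S) (x y : Fin d → ℝ) :
    x ⬝ᵥ S.mulVec y = y ⬝ᵥ S.mulVec x := by
  rw [Matrix.dotProduct_mulVec, ← hS, Matrix.vecMul_transpose, hS, dotProduct_comm]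

lemma herm_symm {S : Matrix (Fin d) (Fin d) ℝ} (h : S.IsHermitian) : Sᵀ = S := by
  have h' := h.eq; rwa [Matrix.conjTranspose_eq_transpose_of_trivial] at h'

lemma telescope {S : Matrix (Fin d) (Fin d) ℝ} (hS : Sᵀ = S) :
    ∀ N : ℕ, 1 ≤ N → ∀ a b : ℕ → Fin d → ℝ,
    (∑ n ∈ Finset.range N,
        (1 / 2) * (b n ⬝ᵥ S.mulVec (b n) - a n ⬝ᵥ S.mulVec (a n)))
      + (∑ n ∈ Finset.Ico 1 N, (a n - b (n - 1)) ⬝ᵥ S.mulVec (a n))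
      + a 0 ⬝ᵥ S.mulVec (a 0)
    = (1 / 2) * (a 0 ⬝ᵥ S.mulVec (a 0))
      + (1 / 2) * ∑ n ∈ Finset.Ico 1 N,
          (a n - b (n - 1)) ⬝ᵥ S.mulVec (a n - b (n - 1))
      + (1 / 2) * (b (N - 1) ⬝ᵥ S.mulVec (b (N - 1))) := by
  intro N
  induction N with
  | zero => omega
  | succ N ih =>
    intro _ a b
    rcases Nat.eq_zero_or_pos N with rfl | hN
    · simp; ring
    · have h1 : Finset.range (N + 1) = insert N (Finset.range N) :=
        (Finset.range_add_one ▸ rfl)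
      have key := ih hN a b
      rw [Finset.sum_range_succ, Finset.sum_Ico_succ_top hN, Finset.sum_Ico_succ_top hN]
      have hsym : b (N-1) ⬝ᵥ S.mulVec (a N) = a N ⬝ᵥ S.mulVec (b (N-1)) :=
        symm_dot hS _ _
      have e1 : (a N - b (N-1)) ⬝ᵥ S.mulVec (a N - b (N-1))
          = a N ⬝ᵥ S.mulVec (a N) - 2 * (b (N-1) ⬝ᵥ S.mulVec (a N))
            + b (N-1) ⬝ᵥ S.mulVec (b (N-1)) := by
        rw [Matrix.mulVec_sub, dotProduct_sub, sub_dotProduct, sub_dotProduct, hsym]; ring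
      have e2 : (a N - b (N-1)) ⬝ᵥ S.mulVec (a N)
          = a N ⬝ᵥ S.mulVec (a N) - b (N-1) ⬝ᵥ S.mulVec (a N) := sub_dotProduct _ _ _
      simp only [Nat.add_sub_cancel]
      linarith [key]

lemma cont_dot {x y : ℝ → Fin d → ℝ} (W : Matrix (Fin d) (Fin d) ℝ)
    (hx : ∀ i, Continuous fun s => x s i) (hy : ∀ i, Continuous fun s => y s i) :
    Continuous fun s => x s ⬝ᵥ W.mulVec (y s) := by
  simp only [dotProduct, Matrix.mulVec]
  exact continuous_finset_sum _ fun i _ => (hx i).mul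
    (continuous_finset_sum _ fun j _ => continuous_const.mul (hy j))

lemma hasDerivAt_dot {x y : ℝ → Fin d → ℝ} {x' y' : Fin d → ℝ} {s : ℝ}
    (W : Matrix (Fin d) (Fin d) ℝ)
    (hx : ∀ i, HasDerivAt (fun s => x s i) (x' i) s)
    (hy : ∀ i, HasDerivAt (fun s => y s i) (y' i) s) :
    HasDerivAt (fun s => x s ⬝ᵥ W.mulVec (y s))
      (x' ⬝ᵥ W.mulVec (y s) + x s ⬝ᵥ W.mulVec y') s := by
  simp only [dotProduct, Matrix.mulVec, ← Finset.sum_add_distrib]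
  apply HasDerivAt.fun_sum
  intro i _
  have hyi : HasDerivAt (fun s => ∑ j, W i j * y s j) (∑ j, W i j * y' j) s :=
    HasDerivAt.fun_sum fun j _ => (hy j).const_mul _
  exact (hx i).mul hyi

lemma poly_hasDerivAt {x : ℝ → Fin d → ℝ} {p : Fin d → Polynomial ℝ}
    (hx : ∀ s i, x s i = (p i).eval s) (s : ℝ) (i : Fin d) :
    HasDerivAt (fun s => x s i) ((p i).derivative.eval s) s := by
  have : (fun s => x s i) = fun s => (p i).eval s := funext fun s => hx s i
  rw [this]; exact (p i).hasDerivAt s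

lemma poly_deriv {x : ℝ → Fin d → ℝ} {p : Fin d → Polynomial ℝ}
    (hx : ∀ s i, x s i = (p i).eval s) (s : ℝ) :
    deriv x s = fun i => (p i).derivative.eval s := by
  have : HasDerivAt x (fun i => (p i).derivative.eval s) s :=
    hasDerivAt_pi.2 fun i => poly_hasDerivAt hx s i
  exact this.deriv

lemma poly_cont {x : ℝ → Fin d → ℝ} {p : Fin d → Polynomial ℝ}
    (hx : ∀ s i, x s i = (p i).eval s) (i : Fin d) :
    Continuous fun s => x s i := by
  have : (fun s => x s i) = fun s => (p i).eval s := funext fun s => hx s i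
  rw [this]; exact (p i).continuous

lemma ftc_half {S : Matrix (Fin d) (Fin d) ℝ} (hS : Sᵀ = S) (a b : ℝ)
    (x : ℝ → Fin d → ℝ) (p : Fin d → Polynomial ℝ) (hx : ∀ s i, x s i = (p i).eval s) :
    ∫ s in a..b, (deriv x s) ⬝ᵥ S.mulVec (x s)
      = (1/2) * (x b ⬝ᵥ S.mulVec (x b) - x a ⬝ᵥ S.mulVec (x a)) := by
  have hder : ∀ s ∈ Set.uIcc a b,
      HasDerivAt (fun s => x s ⬝ᵥ S.mulVec (x s)) (2 * (deriv x s ⬝ᵥ S.mulVec (x s))) s := by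
    intro s _
    have h := hasDerivAt_dot S (x' := fun i => (p i).derivative.eval s)
      (y' := fun i => (p i).derivative.eval s)
      (fun i => poly_hasDerivAt hx s i) (fun i => poly_hasDerivAt hx s i)
    rw [poly_deriv hx s]
    convert h using 1
    rw [symm_dot hS (x s)]
    ring
  have hcont : Continuous fun s => 2 * (deriv x s ⬝ᵥ S.mulVec (x s)) := by
    have : (fun s => deriv x s ⬝ᵥ S.mulVec (x s))
        = fun s => (fun i => (p i).derivative.eval s) ⬝ᵥ S.mulVec (x s) := by
      funext s; rw [poly_deriv hx s]
    refine continuous_const.mul ?_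
    rw [this]
    exact cont_dot S (fun i => (p i).derivative.continuous) (poly_cont hx)
  have := intervalIntegral.integral_eq_sub_of_hasDerivAt hder (hcont.intervalIntegrable a b)
  rw [intervalIntegral.integral_const_mul] at this
  linarith [this]

lemma psd_nonneg {S : Matrix (Fin d) (Fin d) ℝ} (h : S.PosSemidef) (x : Fin d → ℝ) :
    0 ≤ x ⬝ᵥ S.mulVec x := by simpa using h.dotProduct_mulVec_nonneg x

lemma combo {S : Matrix (Fin d) (Fin d) ℝ} (hS : Sᵀ = S) (N : ℕ) (hN : 1 ≤ N)
    (t : ℕ → ℝ) (x : ℕ → ℝ → Fin d → ℝ) :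
    (∑ n ∈ Finset.range N, (1 / 2) * (x n (t (n + 1)) ⬝ᵥ S.mulVec (x n (t (n + 1)))
        - x n (t n) ⬝ᵥ S.mulVec (x n (t n))))
      + (∑ n ∈ Finset.Ico 1 N, (x n (t n) - x (n - 1) (t n)) ⬝ᵥ S.mulVec (x n (t n)))
      + x 0 (t 0) ⬝ᵥ S.mulVec (x 0 (t 0))
    = (1 / 2) * (x 0 (t 0) ⬝ᵥ S.mulVec (x 0 (t 0)))
      + (1 / 2) * ∑ n ∈ Finset.Ico 1 N,
          (x n (t n) - x (n - 1) (t n)) ⬝ᵥ S.mulVec (x n (t n) - x (n - 1) (t n))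
      + (1 / 2) * (x (N - 1) (t N) ⬝ᵥ S.mulVec (x (N - 1) (t N))) := by
  have h := telescope hS N hN (fun n => x n (t n)) (fun n => x n (t (n + 1)))
  have e : ∀ n ∈ Finset.Ico 1 N, x (n - 1) (t (n - 1 + 1)) = x (n - 1) (t n) := by
    intro n hn
    have h1 : n - 1 + 1 = n := by have := (Finset.mem_Ico.1 hn).1; omega
    rw [h1]
  have e2 : x (N - 1) (t (N - 1 + 1)) = x (N - 1) (t N) := by
    have h1 : N - 1 + 1 = N := by omega
    rw [h1]
  calc _ = (∑ n ∈ Finset.range N, (1 / 2) * (x n (t (n + 1)) ⬝ᵥ S.mulVec (x n (t (n + 1)))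
        - x n (t n) ⬝ᵥ S.mulVec (x n (t n))))
      + (∑ n ∈ Finset.Ico 1 N,
          (x n (t n) - x (n - 1) (t (n - 1 + 1))) ⬝ᵥ S.mulVec (x n (t n)))
      + x 0 (t 0) ⬝ᵥ S.mulVec (x 0 (t 0)) := by
        congr 2
        exact (Finset.sum_congr rfl fun n hn => by rw [e n hn]).symm
    _ = (1 / 2) * (x 0 (t 0) ⬝ᵥ S.mulVec (x 0 (t 0)))
      + (1 / 2) * ∑ n ∈ Finset.Ico 1 N,
          (x n (t n) - x (n - 1) (t (n - 1 + 1))) ⬝ᵥ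
            S.mulVec (x n (t n) - x (n - 1) (t (n - 1 + 1)))
      + (1 / 2) * (x (N - 1) (t (N - 1 + 1)) ⬝ᵥ S.mulVec (x (N - 1) (t (N - 1 + 1)))) := h
    _ = _ := by
        rw [e2]
        congr 2
        rw [Finset.sum_congr rfl fun n hn => by rw [e n hn]]

/-- The dG1 bilinear form evaluated at the pair `(A u, v)` equals the
energy seminorm squared, and the latter is nonnegative. -/
theorem stmt5 (d N : ℕ) (hN : 1 ≤ N) (t : ℕ → ℝ)
    (hmono : ∀ n < N, t n < t (n + 1))
    (M D A : Matrix (Fin d) (Fin d) ℝ)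
    (hM : M.PosDef) (hD : D.PosDef) (hA : A.PosSemidef)
    (r : ℕ → ℕ) (u v : ℕ → ℝ → Fin d → ℝ)
    (hu : ∀ n, ∃ p : Fin d → Polynomial ℝ,
      (∀ i, (p i).natDegree ≤ r n) ∧ ∀ s i, u n s i = (p i).eval s)
    (hv : ∀ n, ∃ p : Fin d → Polynomial ℝ,
      (∀ i, (p i).natDegree ≤ r n) ∧ ∀ s i, v n s i = (p i).eval s) :
    dgB d N t M D A u v (fun n s => A.mulVec (u n s)) v
        = rhoSq d N t M D A u v
      ∧ 0 ≤ rhoSq d N t M D A u v := by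
  choose pu _ hpu using hu
  choose pv _ hpv using hv
  have hAs : Aᵀ = A := herm_symm hA.1
  have hMs : Mᵀ = M := herm_symm hM.1
  constructor
  · -- per-slab integral identity
    have hint : ∀ n,
        (∫ s in (t n)..(t (n + 1)), (deriv (u n) s - v n s) ⬝ᵥ A.mulVec (u n s))
        + (∫ s in (t n)..(t (n + 1)),
            (M.mulVec (deriv (v n) s) + D.mulVec (v n s) + A.mulVec (u n s)) ⬝ᵥ v n s)
      = (∫ s in (t n)..(t (n + 1)), v n s ⬝ᵥ D.mulVec (v n s))
        + (1 / 2) * (u n (t (n + 1)) ⬝ᵥ A.mulVec (u n (t (n + 1)))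
            - u n (t n) ⬝ᵥ A.mulVec (u n (t n)))
        + (1 / 2) * (v n (t (n + 1)) ⬝ᵥ M.mulVec (v n (t (n + 1)))
            - v n (t n) ⬝ᵥ M.mulVec (v n (t n))) := by
      intro n
      have c_g : Continuous fun s => v n s ⬝ᵥ A.mulVec (u n s) :=
        cont_dot A (poly_cont (hpv n)) (poly_cont (hpu n))
      have c_D : Continuous fun s => v n s ⬝ᵥ D.mulVec (v n s) :=
        cont_dot D (poly_cont (hpv n)) (poly_cont (hpv n))
      have c_du : Continuous fun s => deriv (u n) s ⬝ᵥ A.mulVec (u n s) := by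
        have h1 : (fun s => deriv (u n) s ⬝ᵥ A.mulVec (u n s))
            = fun s => (fun i => ((pu n) i).derivative.eval s) ⬝ᵥ A.mulVec (u n s) :=
          funext fun s => by rw [poly_deriv (hpu n) s]
        rw [h1]
        exact cont_dot A (fun i => ((pu n i).derivative).continuous) (poly_cont (hpu n))
      have c_dv : Continuous fun s => deriv (v n) s ⬝ᵥ M.mulVec (v n s) := by
        have h1 : (fun s => deriv (v n) s ⬝ᵥ M.mulVec (v n s))
            = fun s => (fun i => ((pv n) i).derivative.eval s) ⬝ᵥ M.mulVec (v n s) :=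
          funext fun s => by rw [poly_deriv (hpv n) s]
        rw [h1]
        exact cont_dot M (fun i => ((pv n i).derivative).continuous) (poly_cont (hpv n))
      have e2 : ∀ s : ℝ,
          (M.mulVec (deriv (v n) s) + D.mulVec (v n s) + A.mulVec (u n s)) ⬝ᵥ v n s
          = deriv (v n) s ⬝ᵥ M.mulVec (v n s) + v n s ⬝ᵥ D.mulVec (v n s)
            + v n s ⬝ᵥ A.mulVec (u n s) := by
        intro s
        rw [add_dotProduct, add_dotProduct, dotProduct_comm (M.mulVec _),
          symm_dot hMs, dotProduct_comm (D.mulVec _),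
          dotProduct_comm (A.mulVec _)]
      have split1 : (∫ s in (t n)..(t (n + 1)), (deriv (u n) s - v n s) ⬝ᵥ A.mulVec (u n s))
          = (∫ s in (t n)..(t (n + 1)), deriv (u n) s ⬝ᵥ A.mulVec (u n s))
            - ∫ s in (t n)..(t (n + 1)), v n s ⬝ᵥ A.mulVec (u n s) := by
        rw [← intervalIntegral.integral_sub (c_du.intervalIntegrable _ _)
          (c_g.intervalIntegrable _ _)]
        simp_rw [sub_dotProduct]
      have split2 : (∫ s in (t n)..(t (n + 1)),
            (M.mulVec (deriv (v n) s) + D.mulVec (v n s) + A.mulVec (u n s)) ⬝ᵥ v n s)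
          = (∫ s in (t n)..(t (n + 1)), deriv (v n) s ⬝ᵥ M.mulVec (v n s))
            + (∫ s in (t n)..(t (n + 1)), v n s ⬝ᵥ D.mulVec (v n s))
            + ∫ s in (t n)..(t (n + 1)), v n s ⬝ᵥ A.mulVec (u n s) := by
        rw [← intervalIntegral.integral_add (c_dv.intervalIntegrable _ _)
          (c_D.intervalIntegrable _ _),
          ← intervalIntegral.integral_add
            ((show Continuous fun s => deriv (v n) s ⬝ᵥ M.mulVec (v n s) + v n s ⬝ᵥ D.mulVec (v n s) from c_dv.add c_D).intervalIntegrable _ _) (c_g.intervalIntegrable _ _)]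
        simp_rw [e2]
      rw [split1, split2, ftc_half hAs (t n) (t (n + 1)) (u n) (pu n) (hpu n),
        ftc_half hMs (t n) (t (n + 1)) (v n) (pv n) (hpv n)]
      ring
    have hsum : (∑ n ∈ Finset.range N, ∫ s in (t n)..(t (n + 1)),
          (deriv (u n) s - v n s) ⬝ᵥ A.mulVec (u n s))
        + (∑ n ∈ Finset.range N, ∫ s in (t n)..(t (n + 1)),
            (M.mulVec (deriv (v n) s) + D.mulVec (v n s) + A.mulVec (u n s)) ⬝ᵥ v n s)
      = (∑ n ∈ Finset.range N, ∫ s in (t n)..(t (n + 1)), v n s ⬝ᵥ D.mulVec (v n s))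
        + (∑ n ∈ Finset.range N, (1 / 2) * (u n (t (n + 1)) ⬝ᵥ A.mulVec (u n (t (n + 1)))
            - u n (t n) ⬝ᵥ A.mulVec (u n (t n))))
        + (∑ n ∈ Finset.range N, (1 / 2) * (v n (t (n + 1)) ⬝ᵥ M.mulVec (v n (t (n + 1)))
            - v n (t n) ⬝ᵥ M.mulVec (v n (t n)))) := by
      rw [← Finset.sum_add_distrib, ← Finset.sum_add_distrib, ← Finset.sum_add_distrib]
      exact Finset.sum_congr rfl fun n _ => hint n
    have cA := combo hAs N hN t u
    have cM := combo hMs N hN t v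
    simp only [dgB, rhoSq]
    have jM : (∑ n ∈ Finset.Ico 1 N,
          M.mulVec (v n (t n) - v (n - 1) (t n)) ⬝ᵥ v n (t n))
        = ∑ n ∈ Finset.Ico 1 N, (v n (t n) - v (n - 1) (t n)) ⬝ᵥ M.mulVec (v n (t n)) :=
      Finset.sum_congr rfl fun n _ => by rw [dotProduct_comm, symm_dot hMs]
    rw [jM, dotProduct_comm (M.mulVec (v 0 (t 0)))]
    linarith [hsum, cA, cM]
  · -- nonnegativity
    simp only [rhoSq]
    have hInt : 0 ≤ ∑ n ∈ Finset.range N, ∫ s in (t n)..(t (n + 1)),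
        v n s ⬝ᵥ D.mulVec (v n s) := by
      apply Finset.sum_nonneg
      intro n hn
      exact intervalIntegral.integral_nonneg (le_of_lt (hmono n (Finset.mem_range.1 hn)))
        fun s _ => psd_nonneg hD.posSemidef (v n s)
    have hMps := hM.posSemidef
    have hj1 : 0 ≤ ∑ n ∈ Finset.Ico 1 N,
        (v n (t n) - v (n - 1) (t n)) ⬝ᵥ M.mulVec (v n (t n) - v (n - 1) (t n)) :=
      Finset.sum_nonneg fun n _ => psd_nonneg hMps _
    have hj2 : 0 ≤ ∑ n ∈ Finset.Ico 1 N,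
        (u n (t n) - u (n - 1) (t n)) ⬝ᵥ A.mulVec (u n (t n) - u (n - 1) (t n)) :=
      Finset.sum_nonneg fun n _ => psd_nonneg hA _
    have p1 := psd_nonneg hMps (v 0 (t 0))
    have p2 := psd_nonneg hMps (v (N - 1) (t N))
    have p3 := psd_nonneg hA (u 0 (t 0))
    have p4 := psd_nonneg hA (u (N - 1) (t N))
    linarith
end

section
/- Let {ψ^1, ..., ψ^{r+1}} be a basis of P^r(a,b] and define (L₁)_{ℓm} = ∫_a^b ψ̇^m ψ^ℓ dt and (L₃)_{ℓm} = ψ^m(a^+)ψ^ℓ(a^+). Then L₁ + L₃ is invertible. Equivalently: if p ∈ P^r satisfies ∫_a^b ṗ(t) q(t) dt + p(a) q(a) = 0 for all q ∈ P^r, then p = 0. -/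
open Matrix Polynomial MeasureTheory intervalIntegral

private lemma poly_zero_aux (r : ℕ) (a b : ℝ) (hab : a < b)
    (p : Polynomial ℝ) (hp : p.natDegree ≤ r)
    (h : ∀ q : Polynomial ℝ, q.natDegree ≤ r →
      (∫ s in a..b, p.derivative.eval s * q.eval s) + p.eval a * q.eval a = 0) :
    p = 0 := by
  -- Step 1: ∫ ṗ p = (p(b)^2 - p(a)^2)/2
  have hint : (∫ s in a..b, p.derivative.eval s * p.eval s)
      = (p.eval b ^ 2 - p.eval a ^ 2) / 2 := by
    have hderiv : ∀ x ∈ Set.uIcc a b,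
        HasDerivAt (fun x => p.eval x ^ 2 / 2) (p.derivative.eval x * p.eval x) x := by
      intro x _
      have h1 : HasDerivAt (fun x => p.eval x) (p.derivative.eval x) x := p.hasDerivAt x
      have h2 := (h1.fun_pow 2).div_const 2
      refine h2.congr_deriv ?_
      ring
    have hcont : IntervalIntegrable (fun x => p.derivative.eval x * p.eval x) volume a b :=
      (Continuous.mul (p.derivative.continuous_aeval) (p.continuous_aeval)).intervalIntegrable a b
    rw [intervalIntegral.integral_eq_sub_of_hasDerivAt hderiv hcont]
    ring
  -- Step 2: taking q = p gives p(a) = p(b) = 0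
  have h1 := h p hp
  rw [hint] at h1
  have hpa : p.eval a = 0 := by nlinarith [sq_nonneg (p.eval a), sq_nonneg (p.eval b)]
  -- Step 3: taking q = ṗ gives ∫ ṗ² = 0
  have hdq : p.derivative.natDegree ≤ r := le_trans (p.natDegree_derivative_le) (le_trans (Nat.sub_le _ _) hp)
  have h2 := h p.derivative hdq
  rw [hpa, zero_mul, add_zero] at h2
  -- ∫ ṗ² = 0 with ṗ² continuous nonneg ⇒ ṗ = 0 on Ioc a b
  have hnn : (0:ℝ → ℝ) ≤ᵐ[volume.restrict (Set.Ioc a b)]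
      fun s => p.derivative.eval s * p.derivative.eval s :=
    Filter.Eventually.of_forall fun s => mul_self_nonneg _
  have hinteg : IntervalIntegrable (fun s => p.derivative.eval s * p.derivative.eval s)
      volume a b :=
    (Continuous.mul (p.derivative.continuous_aeval) (p.derivative.continuous_aeval)).intervalIntegrable a b
  have hae := (intervalIntegral.integral_eq_zero_iff_of_le_of_nonneg_ae hab.le hnn hinteg).mp h2
  -- from a.e. zero and continuity get zero on Ioo
  have hzero : ∀ x ∈ Set.Ioo a b, p.derivative.eval x = 0 := by
    by_contra hcon
    push_neg at hcon
    obtain ⟨x, hx, hxne⟩ := hcon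
    -- the set where ṗ² ≠ 0 is open, contains x, inside Ioo; measure zero contradiction
    have hopen : IsOpen {y | p.derivative.eval y * p.derivative.eval y ≠ 0} :=
      isOpen_ne_fun (Continuous.mul p.derivative.continuous_aeval p.derivative.continuous_aeval)
        continuous_const
    set U := Set.Ioo a b ∩ {y | p.derivative.eval y * p.derivative.eval y ≠ 0} with hU
    have hUopen : IsOpen U := isOpen_Ioo.inter hopen
    have hxU : x ∈ U := ⟨hx, mul_ne_zero hxne hxne⟩
    have hμ : volume U = 0 := by
      have : volume.restrict (Set.Ioc a b) {y | p.derivative.eval y * p.derivative.eval y ≠ 0} = 0 := by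
        have := hae
        rw [Filter.EventuallyEq, ae_iff] at this
        simpa using this
      rw [Measure.restrict_apply₀ hopen.measurableSet.nullMeasurableSet] at this
      refine le_antisymm (le_trans (measure_mono ?_) this.le) (zero_le)
      exact fun y hy => ⟨hy.2, hy.1.1, hy.1.2.le⟩
    exact absurd hμ (hUopen.measure_ne_zero volume ⟨x, hxU⟩)
  -- ṗ vanishes on an infinite set ⇒ ṗ = 0
  have hdzero : p.derivative = 0 := by
    by_contra hne
    have : {x | p.derivative.IsRoot x}.Finite := Polynomial.finite_setOf_isRoot hne
    have hinf : (Set.Ioo a b).Infinite := Set.Ioo_infinite hab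
    exact hinf (this.subset fun x hx => hzero x hx)
  have : p.natDegree = 0 := natDegree_eq_zero_of_derivative_eq_zero hdzero
  obtain ⟨c, hc⟩ := natDegree_eq_zero.mp this
  rw [← hc] at hpa ⊢
  simp at hpa
  simp [hpa]

/-- Invertibility of the local dG1 time matrix `L₁ + L₃`, where
`(L₁)_{ℓm} = ∫_a^b ψ̇^m ψ^ℓ` and `(L₃)_{ℓm} = ψ^m(a) ψ^ℓ(a)` for a basis
`ψ^1, …, ψ^{r+1}` of `P^r(a,b]`; equivalently, a polynomial `p` of degree
at most `r` with `∫_a^b ṗ q + p(a) q(a) = 0` for all `q` of degree at most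
`r` vanishes. -/
theorem stmt13 (r : ℕ) (a b : ℝ) (hab : a < b)
    (ψ : Fin (r + 1) → Polynomial ℝ)
    (hdeg : ∀ i, (ψ i).natDegree ≤ r)
    (hind : LinearIndependent ℝ ψ)
    (L₁ L₃ : Matrix (Fin (r + 1)) (Fin (r + 1)) ℝ)
    (hL₁ : L₁ = Matrix.of fun ℓ m =>
      ∫ s in a..b, (ψ m).derivative.eval s * (ψ ℓ).eval s)
    (hL₃ : L₃ = Matrix.of fun ℓ m => (ψ m).eval a * (ψ ℓ).eval a) :
    IsUnit (L₁ + L₃)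
      ∧ ∀ p : Polynomial ℝ, p.natDegree ≤ r →
          (∀ q : Polynomial ℝ, q.natDegree ≤ r →
            (∫ s in a..b, p.derivative.eval s * q.eval s)
              + p.eval a * q.eval a = 0) →
          p = 0 := by
  have part2 : ∀ p : Polynomial ℝ, p.natDegree ≤ r →
      (∀ q : Polynomial ℝ, q.natDegree ≤ r →
        (∫ s in a..b, p.derivative.eval s * q.eval s) + p.eval a * q.eval a = 0) →
      p = 0 := fun p hp h => poly_zero_aux r a b hab p hp h
  refine ⟨?_, part2⟩
  -- membership in degreeLT
  have hmem : ∀ q : Polynomial ℝ, q.natDegree ≤ r → q ∈ Polynomial.degreeLT ℝ (r + 1) := by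
    intro q hq
    rw [Polynomial.mem_degreeLT]
    calc q.degree ≤ (r : WithBot ℕ) := Polynomial.natDegree_le_iff_degree_le.mp hq
    _ < ((r + 1 : ℕ) : WithBot ℕ) := by exact_mod_cast Nat.lt_succ_self r
  -- spanning
  set S := Polynomial.degreeLT ℝ (r + 1) with hS
  let ψ' : Fin (r + 1) → S := fun i => ⟨ψ i, hmem (ψ i) (hdeg i)⟩
  have hind' : LinearIndependent ℝ ψ' := hind.of_comp S.subtype
  have hfinrank : Module.finrank ℝ S = r + 1 := by
    rw [show Module.finrank ℝ S = Module.finrank ℝ (Fin (r+1) → ℝ) from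
      (Polynomial.degreeLTEquiv ℝ (r+1)).finrank_eq]
    simp
  have hspan : Submodule.span ℝ (Set.range ψ') = ⊤ := by
    have : FiniteDimensional ℝ S := by
      have : FiniteDimensional ℝ (Fin (r+1) → ℝ) := inferInstance
      exact Module.Finite.equiv (Polynomial.degreeLTEquiv ℝ (r+1)).symm
    exact hind'.span_eq_top_of_card_eq_finrank (by simp [hfinrank])
  have hspan2 : ∀ q : Polynomial ℝ, q.natDegree ≤ r → q ∈ Submodule.span ℝ (Set.range ψ) := by
    intro q hq
    have h1 : (⟨q, hmem q hq⟩ : S) ∈ Submodule.span ℝ (Set.range ψ') := hspan ▸ Submodule.mem_top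
    have h2 := Submodule.mem_map_of_mem (f := S.subtype) h1
    rw [Submodule.map_span, ← Set.range_comp] at h2
    exact h2
  -- injectivity of mulVec
  rw [← Matrix.mulVec_injective_iff_isUnit]
  have hker : ∀ v : Fin (r + 1) → ℝ, (L₁ + L₃) *ᵥ v = 0 → v = 0 := by
    intro v hv
    set p : Polynomial ℝ := ∑ m, v m • ψ m with hpdef
    have hpdeg : p.natDegree ≤ r := by
      refine Polynomial.natDegree_sum_le_of_forall_le _ _ fun m _ => ?_
      exact le_trans (Polynomial.natDegree_smul_le _ _) (hdeg m)
    -- the linear functional q ↦ ∫ ṗ q + p(a) q(a)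
    have hIntble : ∀ q : Polynomial ℝ, IntervalIntegrable
        (fun s => p.derivative.eval s * q.eval s) volume a b := fun q =>
      (p.derivative.continuous_aeval.mul q.continuous_aeval).intervalIntegrable a b
    let Φ : Polynomial ℝ →ₗ[ℝ] ℝ :=
      { toFun := fun q => (∫ s in a..b, p.derivative.eval s * q.eval s) + p.eval a * q.eval a
        map_add' := by
          intro q1 q2
          have := intervalIntegral.integral_add (hIntble q1) (hIntble q2)
          simp only [Polynomial.eval_add, mul_add]
          rw [this]
          ring
        map_smul' := by
          intro c q
          simp only [Polynomial.eval_smul, smul_eq_mul, RingHom.id_apply]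
          have : (∫ s in a..b, p.derivative.eval s * (c * q.eval s))
              = c * ∫ s in a..b, p.derivative.eval s * q.eval s := by
            rw [← intervalIntegral.integral_const_mul]
            congr 1; ext s; ring
          rw [this]
          ring }
    -- Φ vanishes on each ψ ℓ
    have hΦψ : ∀ ℓ, Φ (ψ ℓ) = 0 := by
      intro ℓ
      have hvℓ := congrFun hv ℓ
      simp only [Matrix.mulVec, Matrix.add_apply, hL₁, hL₃, Matrix.of_apply, dotProduct,
        Pi.zero_apply] at hvℓ
      show (∫ s in a..b, p.derivative.eval s * (ψ ℓ).eval s) + p.eval a * (ψ ℓ).eval a = 0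
      have hder : p.derivative = ∑ m, v m • (ψ m).derivative := by
        rw [hpdef, map_sum]
        simp
      have heval : ∀ x : ℝ, p.eval x = ∑ m, v m * (ψ m).eval x := by
        intro x; rw [hpdef, Polynomial.eval_finset_sum]; simp
      have e1 : ∀ s : ℝ, p.derivative.eval s * (ψ ℓ).eval s
          = ∑ m, v m * ((ψ m).derivative.eval s * (ψ ℓ).eval s) := by
        intro s
        rw [hder, Polynomial.eval_finset_sum, Finset.sum_mul]
        refine Finset.sum_congr rfl fun m _ => ?_
        simp only [Polynomial.eval_smul, smul_eq_mul]
        ring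
      have hIeq : (∫ s in a..b, p.derivative.eval s * (ψ ℓ).eval s)
          = ∑ m, v m * ∫ s in a..b, (ψ m).derivative.eval s * (ψ ℓ).eval s := by
        calc (∫ s in a..b, p.derivative.eval s * (ψ ℓ).eval s)
            = ∫ s in a..b, ∑ m, v m * ((ψ m).derivative.eval s * (ψ ℓ).eval s) := by
              refine intervalIntegral.integral_congr fun s _ => e1 s
          _ = ∑ m, ∫ s in a..b, v m * ((ψ m).derivative.eval s * (ψ ℓ).eval s) := by
              refine intervalIntegral.integral_finset_sum fun m _ => ?_
              exact (((ψ m).derivative.continuous_aeval.mul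
                (ψ ℓ).continuous_aeval).const_smul (v m)).intervalIntegrable a b
          _ = ∑ m, v m * ∫ s in a..b, (ψ m).derivative.eval s * (ψ ℓ).eval s :=
              Finset.sum_congr rfl fun m _ => intervalIntegral.integral_const_mul _ _
      rw [hIeq, heval a, Finset.sum_mul, ← hvℓ, ← Finset.sum_add_distrib]
      refine Finset.sum_congr rfl fun m _ => ?_
      ring
    -- hence Φ vanishes on all q of degree ≤ r
    have hΦ : ∀ q : Polynomial ℝ, q.natDegree ≤ r → Φ q = 0 := by
      intro q hq
      have : Submodule.span ℝ (Set.range ψ) ≤ LinearMap.ker Φ := by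
        rw [Submodule.span_le]
        rintro _ ⟨ℓ, rfl⟩
        exact hΦψ ℓ
      exact this (hspan2 q hq)
    have hp0 : p = 0 := part2 p hpdeg fun q hq => hΦ q hq
    -- linear independence forces v = 0
    have := Fintype.linearIndependent_iff.mp hind v (by rw [← hpdef, hp0])
    funext i; exact this i
  intro v w hvw
  have : (L₁ + L₃) *ᵥ (v - w) = 0 := by
    rw [Matrix.mulVec_sub, hvw, sub_self]
  have := hker _ this
  exact sub_eq_zero.mp this
end
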